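/- arXiv:2012.14387 — 10 statements merged into one kernel-verified Lean document; each statement's English description precedes it below -/
import Mathlib

section
/- For every real x ≥ 1, ψ(x) − ψ(x/2) ≤ Σ_{l ≤ x} Λ(l) · (⌊x/l⌋ − 2⌊x/(2l)⌋) ≤ ψ(x), where the sum is over positive integers l ≤ x. -/
/-- `ψ x = ∑_{n ≤ x} Λ(n)`, the Chebyshev function. -/
noncomputable def psi (x : ℝ) : ℝ := ∑ n ∈ Finset.Icc 1 ⌊x⌋₊, ArithmeticFunction.vonMangoldt n

lemma floor_two_bounds (u : ℝ) : 0 ≤ ⌊u⌋ - 2 * ⌊u / 2⌋ ∧ ⌊u⌋ - 2 * ⌊u / 2⌋ ≤ 1 := by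
  have h1 : 2 * ⌊u / 2⌋ ≤ ⌊u⌋ := by
    apply Int.le_floor.2
    have := Int.floor_le (u / 2)
    push_cast
    linarith
  have h2 : ⌊u⌋ ≤ 2 * ⌊u / 2⌋ + 1 := by
    have h3 : u / 2 < ⌊u / 2⌋ + 1 := Int.lt_floor_add_one _
    have h4 : (⌊u⌋ : ℝ) ≤ u := Int.floor_le u
    have : (⌊u⌋ : ℝ) < 2 * ⌊u / 2⌋ + 2 := by linarith
    have := (by exact_mod_cast this : ⌊u⌋ < 2 * ⌊u / 2⌋ + 2)
    omega
  omega

theorem stmt_6 (x : ℝ) (hx : 1 ≤ x) :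
    psi x - psi (x / 2) ≤
      (∑ l ∈ Finset.Icc 1 ⌊x⌋₊,
        ArithmeticFunction.vonMangoldt l * ((⌊x / l⌋ : ℝ) - 2 * (⌊x / (2 * l)⌋ : ℝ))) ∧
    (∑ l ∈ Finset.Icc 1 ⌊x⌋₊,
        ArithmeticFunction.vonMangoldt l * ((⌊x / l⌋ : ℝ) - 2 * (⌊x / (2 * l)⌋ : ℝ))) ≤ psi x := by
  have key : ∀ l : ℕ, x / (2 * l) = (x / l) / 2 := by
    intro l; rw [div_div]; ring_nf
  have fbd : ∀ l : ℕ, (0 : ℝ) ≤ (⌊x / l⌋ : ℝ) - 2 * (⌊x / (2 * l)⌋ : ℝ) ∧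
      ((⌊x / l⌋ : ℝ) - 2 * (⌊x / (2 * l)⌋ : ℝ)) ≤ 1 := by
    intro l
    rw [key l]
    obtain ⟨h1, h2⟩ := floor_two_bounds (x / l)
    constructor <;> [exact_mod_cast (by exact_mod_cast h1 : (0:ℝ) ≤ ((⌊x/l⌋ - 2*⌊x/l/2⌋ : ℤ) : ℝ));
      exact_mod_cast (by exact_mod_cast h2 : ((⌊x/l⌋ - 2*⌊x/l/2⌋ : ℤ) : ℝ) ≤ 1)]
  have Λnn : ∀ l : ℕ, (0:ℝ) ≤ ArithmeticFunction.vonMangoldt l := fun l =>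
    ArithmeticFunction.vonMangoldt_nonneg
  constructor
  · -- lower bound
    have hsub : Finset.Icc 1 ⌊x / 2⌋₊ ⊆ Finset.Icc 1 ⌊x⌋₊ := by
      apply Finset.Icc_subset_Icc_right
      exact Nat.floor_le_floor (by linarith)
    have hsplit := Finset.sum_sdiff (f := fun n : ℕ => (ArithmeticFunction.vonMangoldt n : ℝ)) hsub
    have hsplit2 := Finset.sum_sdiff
      (f := fun l : ℕ => ArithmeticFunction.vonMangoldt l *
        ((⌊x / l⌋ : ℝ) - 2 * (⌊x / (2 * l)⌋ : ℝ))) hsub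
    rw [psi, psi, ← hsplit, ← hsplit2]
    have hA : ∑ l ∈ Finset.Icc 1 ⌊x⌋₊ \ Finset.Icc 1 ⌊x / 2⌋₊,
        (ArithmeticFunction.vonMangoldt l : ℝ) ≤
        ∑ l ∈ Finset.Icc 1 ⌊x⌋₊ \ Finset.Icc 1 ⌊x / 2⌋₊,
        ArithmeticFunction.vonMangoldt l * ((⌊x / l⌋ : ℝ) - 2 * (⌊x / (2 * l)⌋ : ℝ)) := by
      apply Finset.sum_le_sum
      intro l hl
      simp only [Finset.mem_sdiff, Finset.mem_Icc, not_and, not_le] at hl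
      obtain ⟨⟨h1, h2⟩, h3⟩ := hl
      have hl2 : ⌊x / 2⌋₊ < l := h3 h1
      have hlx : (l : ℝ) ≤ x := le_trans (Nat.cast_le.2 h2) (Nat.floor_le (by linarith))
      have hlpos : (0:ℝ) < l := by exact_mod_cast h1
      -- floor (x/l) ≥ 1
      have hf1 : (1 : ℤ) ≤ ⌊x / l⌋ := Int.le_floor.2 (by
        push_cast; rw [le_div_iff₀ hlpos]; linarith)
      -- floor (x/(2l)) = 0
      have hf0 : ⌊x / (2 * l)⌋ = 0 := by
        have hlt : x / 2 < l := Nat.lt_of_floor_lt hl2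
        have : x / (2 * l) < 1 := by
          rw [div_lt_one (by positivity)]; linarith
        have hge : 0 ≤ x / (2 * l) := by positivity
        rw [Int.floor_eq_zero_iff]; constructor <;> simp_all [Set.mem_Ico]
      have : (1:ℝ) ≤ (⌊x / l⌋ : ℝ) - 2 * (⌊x / (2 * l)⌋ : ℝ) := by
        rw [hf0]; push_cast; simp; exact_mod_cast hf1
      nlinarith [Λnn l]
    have hB : (0:ℝ) ≤ ∑ l ∈ Finset.Icc 1 ⌊x / 2⌋₊,
        ArithmeticFunction.vonMangoldt l * ((⌊x / l⌋ : ℝ) - 2 * (⌊x / (2 * l)⌋ : ℝ)) := by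
      apply Finset.sum_nonneg
      intro l _
      exact mul_nonneg (Λnn l) (fbd l).1
    have hC : (0:ℝ) ≤ ∑ l ∈ Finset.Icc 1 ⌊x / 2⌋₊,
        (ArithmeticFunction.vonMangoldt l : ℝ) := Finset.sum_nonneg fun l _ => Λnn l
    linarith
  · -- upper bound
    rw [psi]
    apply Finset.sum_le_sum
    intro l _
    nlinarith [Λnn l, (fbd l).2]
end

section
/- There is a constant C > 0 such that for every real x ≥ 2, |Σ_{l ≤ x} Λ(l) · (⌊x/l⌋ − 2⌊x/(2l)⌋) − x log 2| ≤ C · log x, where the sum is over positive integers l ≤ x. -/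
open Finset

local notation "Λ" => ArithmeticFunction.vonMangoldt

lemma log_factorial (N : ℕ) :
    Real.log (Nat.factorial N : ℝ) = ∑ n ∈ Finset.Icc 1 N, Real.log n := by
  rw [← Finset.Ico_add_one_right_eq_Icc,  ← Finset.prod_Ico_id_eq_factorial]
  push_cast
  rw [Real.log_prod]
  intro n hn
  simp only [Finset.mem_Ico] at hn
  exact Nat.cast_ne_zero.mpr (by omega)

lemma sum_vM (N : ℕ) :
    ∑ l ∈ Finset.Icc 1 N, Λ l * ((N / l : ℕ) : ℝ) = Real.log (Nat.factorial N : ℝ) := by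
  rw [log_factorial]
  have h1 : ∀ n ∈ Finset.Icc 1 N, Real.log n = ∑ d ∈ n.divisors, Λ d := fun n hn =>
    (ArithmeticFunction.vonMangoldt_sum).symm
  rw [Finset.sum_congr rfl h1]
  have key : ∀ n ∈ Finset.Icc 1 N, ∑ d ∈ n.divisors, Λ d
      = ∑ d ∈ Finset.Icc 1 N, if d ∣ n then Λ d else 0 := by
    intro n hn
    simp only [Finset.mem_Icc] at hn
    rw [← Finset.sum_filter]
    apply Finset.sum_congr _ (fun _ _ => rfl)
    ext d
    simp only [Nat.mem_divisors, Finset.mem_filter, Finset.mem_Icc]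
    constructor
    · rintro ⟨hd, -⟩
      exact ⟨⟨Nat.pos_of_dvd_of_pos hd (by omega), le_trans (Nat.le_of_dvd (by omega) hd) hn.2⟩, hd⟩
    · rintro ⟨-, hd⟩
      exact ⟨hd, by omega⟩
  rw [Finset.sum_congr rfl key, Finset.sum_comm]
  apply Finset.sum_congr rfl
  intro d hd
  rw [← Finset.sum_filter, Finset.sum_const, nsmul_eq_mul, mul_comm]
  congr 1
  have : Finset.Icc 1 N = Finset.Ioc 0 N := rfl
  rw [this]
  exact_mod_cast (Nat.Ioc_filter_dvd_card_eq_div N d).symm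

lemma cb_upper (M : ℕ) : Nat.centralBinom M ≤ 4 ^ M := by
  calc Nat.centralBinom M = (2*M).choose M := rfl
    _ ≤ ∑ i ∈ Finset.range (2*M+1), (2*M).choose i :=
        Finset.single_le_sum (fun i _ => Nat.zero_le _) (by simp; omega)
    _ = 2 ^ (2*M) := Nat.sum_range_choose (2*M)
    _ = 4 ^ M := by rw [pow_mul]; norm_num

lemma cb_log (M : ℕ) :
    |Real.log (Nat.centralBinom M) - 2 * M * Real.log 2| ≤ Real.log (2 * M + 1) := by
  have hpos : (0:ℝ) < Nat.centralBinom M := by exact_mod_cast Nat.centralBinom_pos M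
  have h4 : (2:ℝ) * M * Real.log 2 = Real.log (4 ^ M : ℝ) := by
    rw [show (4:ℝ) = 2^2 by norm_num, ← pow_mul, Real.log_pow]; push_cast; ring
  have hub : Real.log (Nat.centralBinom M) ≤ 2 * M * Real.log 2 := by
    rw [h4]
    apply Real.log_le_log hpos
    exact_mod_cast cb_upper M
  have hlb : 2 * M * Real.log 2 ≤ Real.log (2*M+1) + Real.log (Nat.centralBinom M) := by
    rw [h4, ← Real.log_mul (by positivity) (ne_of_gt hpos)]
    apply Real.log_le_log (by positivity)
    have := Nat.four_pow_le_two_mul_add_one_mul_central_binom M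
    exact_mod_cast this
  have hl1 : (0:ℝ) ≤ Real.log (2*M+1) := Real.log_nonneg (le_add_of_nonneg_left (by positivity))
  rw [abs_le]
  constructor <;> linarith

lemma log_fact_split (M : ℕ) :
    Real.log (Nat.factorial (2*M) : ℝ)
      = Real.log (Nat.centralBinom M) + 2 * Real.log (Nat.factorial M : ℝ) := by
  have h := Nat.choose_mul_factorial_mul_factorial (show M ≤ 2*M by omega)
  rw [show 2*M - M = M by omega] at h
  have : ((2*M).factorial : ℝ) = (Nat.centralBinom M : ℝ) * M.factorial * M.factorial := by
    rw [Nat.centralBinom]; exact_mod_cast h.symm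
  have h1 : (Nat.centralBinom M : ℝ) ≠ 0 := by exact_mod_cast Nat.centralBinom_ne_zero M
  have h2 : (Nat.factorial M : ℝ) ≠ 0 := by exact_mod_cast (Nat.factorial_pos M).ne'
  rw [this, Real.log_mul (mul_ne_zero h1 h2) h2, Real.log_mul h1 h2]
  ring

theorem stmt_7 :
    ∃ C : ℝ, 0 < C ∧ ∀ x : ℝ, 2 ≤ x →
      |(∑ l ∈ Finset.Icc 1 ⌊x⌋₊,
          ArithmeticFunction.vonMangoldt l * ((⌊x / l⌋ : ℝ) - 2 * (⌊x / (2 * l)⌋ : ℝ))) -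
        x * Real.log 2| ≤ C * Real.log x := by
  refine ⟨6, by norm_num, fun x hx => ?_⟩
  set N := ⌊x⌋₊ with hN
  set M := N / 2 with hMdef
  have hx0 : (0:ℝ) < x := by linarith
  have hN2 : 2 ≤ N := Nat.le_floor (by exact_mod_cast hx)
  have hNx : (N:ℝ) ≤ x := Nat.floor_le hx0.le
  have hxN : x < N + 1 := Nat.lt_floor_add_one x
  have hM1 : 1 ≤ M := by omega
  have h2M : 2 * M ≤ N ∧ N ≤ 2 * M + 1 := by omega
  have hterm : ∀ l ∈ Finset.Icc 1 N,
      ArithmeticFunction.vonMangoldt l * ((⌊x / l⌋ : ℝ) - 2 * (⌊x / (2 * l)⌋ : ℝ))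
        = ArithmeticFunction.vonMangoldt l * ((N / l : ℕ) : ℝ)
          - 2 * (ArithmeticFunction.vonMangoldt l * ((M / l : ℕ) : ℝ)) := by
    intro l hl
    simp only [Finset.mem_Icc] at hl
    have hl0 : (0:ℝ) < l := by exact_mod_cast hl.1
    have e1 : ((⌊x / l⌋ : ℤ) : ℝ) = ((N / l : ℕ) : ℝ) := by
      rw [← natCast_floor_eq_intCast_floor (by positivity), Nat.floor_div_natCast]
    have e2 : ((⌊x / (2 * l)⌋ : ℤ) : ℝ) = ((M / l : ℕ) : ℝ) := by
      have hc : x / (2 * (l:ℝ)) = x / (((2 * l : ℕ) : ℝ)) := by push_cast; ring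
      rw [hc, ← natCast_floor_eq_intCast_floor (by positivity), Nat.floor_div_natCast,
        ← Nat.div_div_eq_div_mul]
    rw [e1, e2]; ring
  rw [Finset.sum_congr rfl hterm, Finset.sum_sub_distrib, ← Finset.mul_sum]
  have hsub : ∑ l ∈ Finset.Icc 1 N, ArithmeticFunction.vonMangoldt l * ((M / l : ℕ) : ℝ)
      = ∑ l ∈ Finset.Icc 1 M, ArithmeticFunction.vonMangoldt l * ((M / l : ℕ) : ℝ) := by
    symm
    apply Finset.sum_subset (Finset.Icc_subset_Icc_right (by omega))
    intro l hl hl2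
    simp only [Finset.mem_Icc] at hl hl2
    have : M / l = 0 := Nat.div_eq_of_lt (by omega)
    simp [this]
  rw [hsub, sum_vM N, sum_vM M]
  set L1 := Real.log ((2*M : ℕ) + 1 : ℝ) with hL1def
  have hlogN : Real.log (Nat.factorial N : ℝ)
      = Real.log (Nat.factorial (2*M) : ℝ) + ((N % 2 : ℕ) : ℝ) * L1 := by
    rcases Nat.mod_two_eq_zero_or_one N with h | h
    · rw [h, show N = 2*M by omega]; push_cast; ring
    · rw [h, show N = 2*M+1 by omega, Nat.factorial_succ]
      push_cast
      rw [Real.log_mul (by positivity) (by positivity), hL1def]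
      push_cast
      ring
  rw [hlogN, log_fact_split M]
  have hcb := cb_log M
  rw [abs_le] at hcb
  have hL1x : L1 ≤ 2 * Real.log x := by
    have hle : ((2*M : ℕ) + 1 : ℝ) ≤ x ^ 2 := by
      have h1 : ((2*M : ℕ) : ℝ) ≤ x := le_trans (by exact_mod_cast h2M.1) hNx
      nlinarith
    calc L1 ≤ Real.log (x ^ 2) := Real.log_le_log (by positivity) hle
      _ = 2 * Real.log x := by
          rw [show x ^ 2 = x * x by ring, Real.log_mul (by positivity) (by positivity)]; ring
  have hL1nn : 0 ≤ L1 := Real.log_nonneg (le_add_of_nonneg_left (by positivity))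
  have hlog2x : Real.log 2 ≤ Real.log x := Real.log_le_log two_pos hx
  have hlog2nn : (0:ℝ) < Real.log 2 := Real.log_pos (by norm_num)
  have hxlow : ((2*M : ℕ) : ℝ) ≤ x := le_trans (by exact_mod_cast h2M.1) hNx
  have hxhigh : x ≤ ((2*M : ℕ) : ℝ) + 2 := by
    have h1 : (N : ℝ) ≤ ((2*M : ℕ) : ℝ) + 1 := by exact_mod_cast h2M.2
    linarith
  have hp1 : ((2*M : ℕ) : ℝ) * Real.log 2 ≤ x * Real.log 2 :=
    mul_le_mul_of_nonneg_right hxlow hlog2nn.le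
  have hp2 : x * Real.log 2 ≤ (((2*M : ℕ) : ℝ) + 2) * Real.log 2 :=
    mul_le_mul_of_nonneg_right hxhigh hlog2nn.le
  have hepsL : (0:ℝ) ≤ ((N % 2 : ℕ) : ℝ) * L1 ∧ ((N % 2 : ℕ) : ℝ) * L1 ≤ L1 := by
    have he1 : (0:ℝ) ≤ ((N % 2 : ℕ) : ℝ) := by positivity
    have he2 : ((N % 2 : ℕ) : ℝ) ≤ 1 := by
      exact_mod_cast Nat.le_of_lt_succ (Nat.mod_lt N (by norm_num))
    exact ⟨by positivity, by nlinarith⟩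
  have hlogxnn : 0 ≤ Real.log x := Real.log_nonneg (by linarith)
  have hcb2 : |Real.log (Nat.centralBinom M) - 2 * (M:ℝ) * Real.log 2| ≤ L1 := by
    rw [hL1def]; push_cast
    exact cb_log M
  rw [abs_le] at hcb2
  have hcast : 2 * (M:ℝ) * Real.log 2 = ((2*M : ℕ) : ℝ) * Real.log 2 := by push_cast; ring
  rw [abs_le]
  constructor <;> linarith [hcb2.1, hcb2.2, hepsL.1, hepsL.2, hp1, hp2, hL1x, hL1nn, hlog2x, hlogxnn, hcast]
end

section
/- There is a constant C > 0 such that for every real x ≥ 2, ψ(x) ≥ x log 2 − C · log x. -/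
open Finset ArithmeticFunction

lemma logfac (N : ℕ) :
    Real.log (N.factorial) = ∑ d ∈ Icc 1 N, Λ d * (N / d : ℕ) := by
  have h1 : Real.log (N.factorial) = ∑ n ∈ Icc 1 N, Real.log n := by
    rw [← Finset.prod_Ico_id_eq_factorial, ← Finset.Ico_add_one_right_eq_Icc, Nat.cast_prod, Real.log_prod]
    intro n hn
    simp only [mem_Ico] at hn
    have : (1:ℕ) ≤ n := hn.1
    positivity
  rw [h1, sum_congr rfl (fun n _ => (ArithmeticFunction.vonMangoldt_sum (n := n)).symm)]
  rw [Finset.sum_comm' (s' := fun d => (Icc 1 N).filter (d ∣ ·)) (t' := Icc 1 N)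
    (h := by
      intro n d
      simp only [mem_Icc, mem_filter, Nat.mem_divisors]
      constructor
      · rintro ⟨⟨h1n, h2n⟩, hd, hn0⟩
        exact ⟨⟨⟨h1n, h2n⟩, hd⟩, Nat.one_le_iff_ne_zero.2 (fun h => by simp [h] at hd; omega),
          le_trans (Nat.le_of_dvd (by omega) hd) h2n⟩
      · rintro ⟨⟨⟨h1n, h2n⟩, hd⟩, _, _⟩
        exact ⟨⟨h1n, h2n⟩, hd, by omega⟩)]
  refine sum_congr rfl fun d _ => ?_
  rw [Finset.sum_const, nsmul_eq_mul, mul_comm]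
  congr 1
  rw [show Icc 1 N = Ioc 0 N from rfl]
  exact_mod_cast Nat.Ioc_filter_dvd_card_eq_div N d

-- T(N) - 2 T(N/2) ≤ ψ(N)
lemma TleQ (N : ℕ) :
    Real.log (N.factorial) - 2 * Real.log ((N / 2).factorial) ≤ ∑ d ∈ Icc 1 N, Λ d := by
  rw [logfac, logfac]
  have hsub : ∑ d ∈ Icc 1 (N / 2), Λ d * ((N / 2) / d : ℕ)
      = ∑ d ∈ Icc 1 N, Λ d * ((N / 2) / d : ℕ) := by
    apply Finset.sum_subset (Icc_subset_Icc le_rfl (Nat.div_le_self N 2))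
    intro d hd hnd
    simp only [mem_Icc] at hd hnd
    have : N / 2 < d := by omega
    rw [Nat.div_eq_of_lt this]
    simp
  rw [hsub, Finset.mul_sum, ← Finset.sum_sub_distrib]
  apply Finset.sum_le_sum
  intro d hd
  have hΛ : 0 ≤ Λ d := ArithmeticFunction.vonMangoldt_nonneg
  have key : (N / d : ℕ) ≤ 2 * (N / 2 / d : ℕ) + 1 := by
    rw [Nat.div_div_eq_div_mul, mul_comm 2 d, ← Nat.div_div_eq_div_mul]
    omega
  calc Λ d * (N / d : ℕ) - 2 * (Λ d * (N / 2 / d : ℕ))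
      ≤ Λ d * (2 * (N / 2 / d : ℕ) + 1) - 2 * (Λ d * (N / 2 / d : ℕ)) := by
        have : ((N / d : ℕ) : ℝ) ≤ 2 * ((N / 2 / d : ℕ) : ℝ) + 1 := by exact_mod_cast key
        nlinarith
    _ = Λ d := by ring


lemma natkey (N : ℕ) : 2 ^ N * ((N / 2).factorial * (N / 2).factorial) ≤ (N + 1) * N.factorial := by
  set M := N / 2 with hM
  have hMN : M ≤ N := Nat.div_le_self N 2
  have h1 : 2 ^ N ≤ (N + 1) * N.choose M := by
    calc 2 ^ N = ∑ m ∈ Finset.range (N + 1), N.choose m := (Nat.sum_range_choose N).symm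
      _ ≤ ∑ _m ∈ Finset.range (N + 1), N.choose M := by
          exact Finset.sum_le_sum fun m _ => Nat.choose_le_middle m N
      _ = (N + 1) * N.choose M := by simp [mul_comm]
  have h2 : N.choose M * (M.factorial * M.factorial) ≤ N.factorial := by
    have h3 : N.choose M * M.factorial * (N - M).factorial = N.factorial :=
      Nat.choose_mul_factorial_mul_factorial hMN
    have h4 : M.factorial ≤ (N - M).factorial := Nat.factorial_le (by omega)
    calc N.choose M * (M.factorial * M.factorial) = N.choose M * M.factorial * M.factorial := by ring
      _ ≤ N.choose M * M.factorial * (N - M).factorial :=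
        Nat.mul_le_mul_left _ h4
      _ = N.factorial := h3
  calc 2 ^ N * (M.factorial * M.factorial) ≤ (N + 1) * N.choose M * (M.factorial * M.factorial) :=
        Nat.mul_le_mul_right _ h1
    _ = (N + 1) * (N.choose M * (M.factorial * M.factorial)) := by ring
    _ ≤ (N + 1) * N.factorial := Nat.mul_le_mul_left _ h2

lemma logkey (N : ℕ) :
    N * Real.log 2 - Real.log (N + 1)
      ≤ Real.log (N.factorial) - 2 * Real.log ((N / 2).factorial) := by
  have h := natkey N
  have hlog := Real.log_le_log (by positivity) (by exact_mod_cast h :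
    ((2 ^ N * ((N / 2).factorial * (N / 2).factorial) : ℕ) : ℝ) ≤ ((N + 1) * N.factorial : ℕ))
  rw [Nat.cast_mul, Nat.cast_mul, Nat.cast_mul, Nat.cast_pow, Nat.cast_add, Nat.cast_one] at hlog
  rw [Real.log_mul (by positivity) (by positivity), Real.log_mul (by positivity) (by positivity),
    Real.log_mul (by positivity) (by positivity), Real.log_pow] at hlog
  linarith


theorem stmt_8 :
    ∃ C : ℝ, 0 < C ∧ ∀ x : ℝ, 2 ≤ x → x * Real.log 2 - C * Real.log x ≤ psi x := by
  refine ⟨3, by norm_num, fun x hx => ?_⟩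
  set N := ⌊x⌋₊ with hN
  have hx0 : (0:ℝ) < x := by linarith
  have hN2 : 2 ≤ N := Nat.le_floor (by exact_mod_cast hx)
  have hNx : (N : ℝ) ≤ x := Nat.floor_le hx0.le
  have hxN : x < N + 1 := Nat.lt_floor_add_one x
  have hψ : (N : ℝ) * Real.log 2 - Real.log (N + 1) ≤ psi x := by
    have := (logkey N).trans (TleQ N)
    exact this
  have hlog1 : Real.log (N + 1) ≤ 2 * Real.log x := by
    have h1 : (N : ℝ) + 1 ≤ x ^ 2 := by nlinarith
    calc Real.log (N + 1) ≤ Real.log (x ^ 2) := Real.log_le_log (by positivity) h1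
      _ = 2 * Real.log x := by rw [Real.log_pow]; norm_num
  have hlog2 : Real.log 2 ≤ Real.log x := Real.log_le_log (by norm_num) hx
  have hxlog : x * Real.log 2 ≤ (N : ℝ) * Real.log 2 + Real.log 2 := by
    have h2 : (0:ℝ) < Real.log 2 := Real.log_pos (by norm_num)
    nlinarith
  linarith
end

section
/- There is a constant C > 0 such that for every real x ≥ 2, ψ(x) ≤ (2 log 2) · x + C · (log x)². -/
open Finset ArithmeticFunction

/-- If `n < p^k ≤ 2n` for a prime `p`, then `p` divides the central binomial coefficient. -/
lemma aux_dvd_choose {p n k : ℕ} (hp : p.Prime) (hn : n < p ^ k) (h2n : p ^ k ≤ 2 * n) :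
    p ∣ (2 * n).choose n := by
  have hn0 : n ≠ 0 := by
    rintro rfl
    simp only [mul_zero, Nat.le_zero] at h2n
    exact absurd h2n (by positivity)
  have hk : 1 ≤ k := by
    rcases Nat.eq_zero_or_pos k with rfl | h
    · simp at hn; omega
    · exact h
  have hlog : k ≤ Nat.log p (2 * n) :=
    (Nat.le_log_iff_pow_le hp.one_lt (by omega)).mpr h2n
  have hmul := hp.emultiplicity_choose (n := 2 * n) (k := n)
    (b := Nat.log p (2 * n) + 1) (by omega) (Nat.lt_succ_self _)
  have hkmem : k ∈ {i ∈ Finset.Ico 1 (Nat.log p (2 * n) + 1) |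
      p ^ i ≤ n % p ^ i + (2 * n - n) % p ^ i} := by
    rw [Finset.mem_filter, Finset.mem_Ico]
    refine ⟨⟨hk, by omega⟩, ?_⟩
    have h1 : 2 * n - n = n := by omega
    rw [h1, Nat.mod_eq_of_lt hn]
    omega
  have h1 : (1 : ℕ∞) ≤ emultiplicity p ((2 * n).choose n) := by
    rw [hmul]
    exact_mod_cast Finset.card_pos.mpr ⟨k, hkmem⟩
  simpa using pow_dvd_of_le_emultiplicity h1

/-- The sum of `Λ` over `(n, 2n]` is at most `2n log 2`. -/
lemma aux_sum_Ioc (n : ℕ) :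
    ∑ m ∈ Finset.Ioc n (2 * n), Λ m ≤ (2 * n : ℝ) * Real.log 2 := by
  classical
  set S := (Finset.Ioc n (2 * n)).filter IsPrimePow with hS
  have hstep1 : ∑ m ∈ Finset.Ioc n (2 * n), Λ m = ∑ m ∈ S, Λ m := by
    rw [hS]
    exact (Finset.sum_filter_of_ne fun m _ h => vonMangoldt_ne_zero_iff.mp h).symm
  -- minFac is injective on S
  have hinj : ∀ a ∈ S, ∀ b ∈ S, a.minFac = b.minFac → a = b := by
    have key : ∀ a ∈ S, ∀ b ∈ S, a ≤ b → a.minFac = b.minFac → a = b := by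
      intro a ha b hb hab hfac
      rw [hS, Finset.mem_filter, Finset.mem_Ioc] at ha hb
      obtain ⟨⟨han, ha2n⟩, p, i, hp, hi, rfl⟩ := ha
      obtain ⟨⟨hbn, hb2n⟩, q, j, hq, hj, rfl⟩ := hb
      rw [hp.nat_prime.pow_minFac hi.ne', hq.nat_prime.pow_minFac hj.ne'] at hfac
      subst hfac
      rcases Nat.lt_or_ge i j with hij | hij
      · exfalso
        have h1 : p ^ (i + 1) ≤ p ^ j := Nat.pow_le_pow_right hp.nat_prime.pos (by omega)
        have h2 : 2 * p ^ i ≤ p ^ (i + 1) := by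
          rw [pow_succ, mul_comm]
          exact Nat.mul_le_mul_left _ hp.nat_prime.two_le
        omega
      · have : p ^ j ≤ p ^ i := Nat.pow_le_pow_right hp.nat_prime.pos hij
        omega
    intro a ha b hb hfac
    rcases le_total a b with h | h
    · exact key a ha b hb h hfac
    · exact (key b hb a ha h hfac.symm).symm
  set T := S.image Nat.minFac with hT
  have hTmem : ∀ q ∈ T, q.Prime ∧ q ∣ (2 * n).choose n := by
    intro q hq
    rw [hT, Finset.mem_image] at hq
    obtain ⟨m, hm, rfl⟩ := hq
    rw [hS, Finset.mem_filter, Finset.mem_Ioc] at hm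
    obtain ⟨⟨hmn, hm2n⟩, p, i, hp, hi, rfl⟩ := hm
    rw [hp.nat_prime.pow_minFac hi.ne']
    exact ⟨hp.nat_prime, aux_dvd_choose hp.nat_prime hmn hm2n⟩
  have hstep2 : ∑ m ∈ S, Λ m = ∑ q ∈ T, Real.log q := by
    rw [hT, Finset.sum_image hinj]
    refine Finset.sum_congr rfl fun m hm => ?_
    rw [hS, Finset.mem_filter] at hm
    rw [vonMangoldt_apply, if_pos hm.2]
  have hprod_dvd : ∏ q ∈ T, q ∣ (2 * n).choose n :=
    Finset.prod_primes_dvd _ (fun q hq => Nat.prime_iff.mp (hTmem q hq).1)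
      (fun q hq => (hTmem q hq).2)
  have hchoose_pos : 0 < (2 * n).choose n := Nat.choose_pos (by omega)
  have hprod_le : ∏ q ∈ T, q ≤ (2 * n).choose n := Nat.le_of_dvd hchoose_pos hprod_dvd
  have hchoose_le : (2 * n).choose n ≤ 4 ^ n := by
    have h1 : (2 * n).choose n ≤ ∑ i ∈ Finset.range (2 * n + 1), (2 * n).choose i :=
      Finset.single_le_sum (fun i _ => Nat.zero_le _) (Finset.mem_range.mpr (by omega))
    rw [Nat.sum_range_choose] at h1
    calc (2 * n).choose n ≤ 2 ^ (2 * n) := h1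
      _ = 4 ^ n := by rw [show (4 : ℕ) = 2 ^ 2 by norm_num, ← pow_mul]
  have hlog_prod : Real.log (((∏ q ∈ T, q : ℕ) : ℕ) : ℝ) = ∑ q ∈ T, Real.log q := by
    rw [Nat.cast_prod]
    exact Real.log_prod fun q hq => by exact_mod_cast (hTmem q hq).1.pos.ne'
  have hprod_posR : (0 : ℝ) < (((∏ q ∈ T, q : ℕ) : ℕ) : ℝ) := by
    exact_mod_cast Finset.prod_pos fun q hq => (hTmem q hq).1.pos
  have hleR : (((∏ q ∈ T, q : ℕ) : ℕ) : ℝ) ≤ (4 : ℝ) ^ n := by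
    have h := hprod_le.trans hchoose_le
    exact_mod_cast h
  have hfinal : Real.log (((∏ q ∈ T, q : ℕ) : ℕ) : ℝ) ≤ (2 * n : ℝ) * Real.log 2 := by
    have h1 : Real.log (((∏ q ∈ T, q : ℕ) : ℕ) : ℝ) ≤ Real.log ((4 : ℝ) ^ n) :=
      Real.log_le_log hprod_posR hleR
    rw [Real.log_pow] at h1
    have h4 : Real.log 4 = 2 * Real.log 2 := by
      rw [show (4 : ℝ) = 2 ^ 2 by norm_num, Real.log_pow]
      push_cast; ring
    rw [h4] at h1
    calc Real.log (((∏ q ∈ T, q : ℕ) : ℕ) : ℝ) ≤ (n : ℝ) * (2 * Real.log 2) := h1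
      _ = (2 * n : ℝ) * Real.log 2 := by push_cast; ring
  calc ∑ m ∈ Finset.Ioc n (2 * n), Λ m = ∑ q ∈ T, Real.log q := by
        rw [hstep1, hstep2]
    _ = Real.log (((∏ q ∈ T, q : ℕ) : ℕ) : ℝ) := hlog_prod.symm
    _ ≤ (2 * n : ℝ) * Real.log 2 := hfinal

/-- The natural number version of the Chebyshev bound. -/
lemma aux_psi_nat : ∀ m : ℕ, ∑ j ∈ Finset.Ioc 0 m, Λ j ≤
    2 * Real.log 2 * m + 3 * (Real.log m) ^ 2 := by
  intro m
  induction m using Nat.strong_induction_on with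
  | _ m ih =>
    rcases Nat.lt_or_ge m 2 with hm | hm
    · interval_cases m
      · simp
      · rw [show Finset.Ioc 0 1 = {1} from rfl, Finset.sum_singleton, vonMangoldt_apply_one]
        simp only [Nat.cast_one, Real.log_one]
        have := Real.log_pos (by norm_num : (1:ℝ) < 2)
        nlinarith
    -- m ≥ 2
    set n := m / 2 with hn
    have hnm : n < m := by omega
    have h2nm : 2 * n ≤ m := by omega
    have hn1 : 1 ≤ n := by omega
    have hsplit : ∑ j ∈ Finset.Ioc 0 m, Λ j =
        (∑ j ∈ Finset.Ioc 0 n, Λ j) + ∑ j ∈ Finset.Ioc n m, Λ j :=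
      (Finset.sum_Ioc_consecutive _ (by omega) (by omega)).symm
    have hlogm_nonneg : 0 ≤ Real.log m := Real.log_nonneg (by exact_mod_cast (by omega : 1 ≤ m))
    have htail : ∑ j ∈ Finset.Ioc n m, Λ j ≤ (2 * n : ℝ) * Real.log 2 + Real.log m := by
      rcases Nat.mod_two_eq_zero_or_one m with hpar | hpar
      · have hm2n : m = 2 * n := by omega
        have h0 := aux_sum_Ioc n
        calc ∑ j ∈ Finset.Ioc n m, Λ j = ∑ j ∈ Finset.Ioc n (2 * n), Λ j := by rw [hm2n]
          _ ≤ (2 * n : ℝ) * Real.log 2 := h0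
          _ ≤ (2 * n : ℝ) * Real.log 2 + Real.log m := by linarith
      · have hm2n : m = 2 * n + 1 := by omega
        have h1 := aux_sum_Ioc n
        have h2 : Λ m ≤ Real.log m := vonMangoldt_le_log
        calc ∑ j ∈ Finset.Ioc n m, Λ j
            = (∑ j ∈ Finset.Ioc n (2 * n), Λ j) + Λ (2 * n + 1) := by
              rw [hm2n]; exact Finset.sum_Ioc_succ_top (by omega) _
          _ ≤ (2 * n : ℝ) * Real.log 2 + Real.log m := by
              have he : Λ (2 * n + 1) = Λ m := by rw [hm2n]
              rw [he]; linarith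
    have hih := ih n hnm
    -- log bounds
    have hlog2_pos : (0 : ℝ) < Real.log 2 := Real.log_pos (by norm_num)
    have hlogn_nonneg : 0 ≤ Real.log n := Real.log_nonneg (by exact_mod_cast hn1)
    have hlogn_le : Real.log n ≤ Real.log m - Real.log 2 := by
      have h1 : (n : ℝ) ≤ (m : ℝ) / 2 := by
        rw [hn]; exact_mod_cast Nat.cast_div_le
      have h2 : Real.log n ≤ Real.log ((m : ℝ) / 2) :=
        Real.log_le_log (by exact_mod_cast hn1) h1
      rwa [Real.log_div (by positivity) (by norm_num)] at h2
    have hsq : (Real.log n) ^ 2 ≤ (Real.log m - Real.log 2) ^ 2 :=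
      pow_le_pow_left₀ hlogn_nonneg hlogn_le 2
    have hlogm_ge : Real.log 2 ≤ Real.log m :=
      Real.log_le_log (by norm_num) (by exact_mod_cast hm)
    have hkey : 3 * (Real.log m - Real.log 2) ^ 2 + Real.log m ≤ 3 * (Real.log m) ^ 2 := by
      nlinarith [Real.log_two_gt_d9, hlogm_ge, hlog2_pos]
    have hcast : (2 * n : ℝ) ≤ (m : ℝ) := by exact_mod_cast h2nm
    have h2n_bound : 2 * Real.log 2 * (n : ℝ) + (2 * n : ℝ) * Real.log 2 ≤
        2 * Real.log 2 * (m : ℝ) := by nlinarith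
    calc ∑ j ∈ Finset.Ioc 0 m, Λ j
        = (∑ j ∈ Finset.Ioc 0 n, Λ j) + ∑ j ∈ Finset.Ioc n m, Λ j := hsplit
      _ ≤ (2 * Real.log 2 * n + 3 * (Real.log n) ^ 2) +
          ((2 * n : ℝ) * Real.log 2 + Real.log m) := by linarith
      _ ≤ 2 * Real.log 2 * m + 3 * (Real.log m) ^ 2 := by nlinarith

theorem stmt_9 :
    ∃ C : ℝ, 0 < C ∧ ∀ x : ℝ, 2 ≤ x →
      psi x ≤ (2 * Real.log 2) * x + C * (Real.log x) ^ 2 := by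
  refine ⟨3, by norm_num, fun x hx => ?_⟩
  have hx0 : (0 : ℝ) ≤ x := by linarith
  have hfloor2 : 2 ≤ ⌊x⌋₊ := Nat.le_floor (by exact_mod_cast hx)
  have hfloor_le : (⌊x⌋₊ : ℝ) ≤ x := Nat.floor_le hx0
  have h1 : psi x = ∑ j ∈ Finset.Ioc 0 ⌊x⌋₊, Λ j := by
    rw [psi, ← Finset.Icc_add_one_left_eq_Ioc, zero_add]
  have h2 := aux_psi_nat ⌊x⌋₊
  have hlog2_pos : (0 : ℝ) < Real.log 2 := Real.log_pos (by norm_num)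
  have hlogf_nonneg : 0 ≤ Real.log (⌊x⌋₊ : ℝ) :=
    Real.log_nonneg (by exact_mod_cast (by omega : 1 ≤ ⌊x⌋₊))
  have hlogf_le : Real.log (⌊x⌋₊ : ℝ) ≤ Real.log x :=
    Real.log_le_log (by exact_mod_cast (by omega : (0:ℕ) < ⌊x⌋₊)) hfloor_le
  have hsq : (Real.log (⌊x⌋₊ : ℝ)) ^ 2 ≤ (Real.log x) ^ 2 :=
    pow_le_pow_left₀ hlogf_nonneg hlogf_le 2
  rw [h1]
  calc ∑ j ∈ Finset.Ioc 0 ⌊x⌋₊, Λ j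
      ≤ 2 * Real.log 2 * (⌊x⌋₊ : ℝ) + 3 * (Real.log (⌊x⌋₊ : ℝ)) ^ 2 := h2
    _ ≤ (2 * Real.log 2) * x + 3 * (Real.log x) ^ 2 := by nlinarith
end

section
/- For all sufficiently large real x, (log 2) · x / log x < π(x) < (2 log 2) · x / log x. -/
open Finset ArithmeticFunction Real

/-- `π x`, the number of primes `≤ x`. -/
noncomputable def primePi (x : ℝ) : ℕ := ((Finset.Icc 1 ⌊x⌋₊).filter Nat.Prime).card

namespace Cheb


noncomputable def eE (m : ℕ) : ℤ := (m:ℤ) - ((m/2 : ℕ):ℤ) - ((m/3 : ℕ):ℤ) - ((m/5 : ℕ):ℤ) + ((m/30 : ℕ):ℤ)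

lemma eE01 (m : ℕ) : eE m = 0 ∨ eE m = 1 := by unfold eE; omega

lemma eE_small (m : ℕ) (h1 : 1 ≤ m) (h5 : m ≤ 5) : eE m = 1 := by unfold eE; omega


noncomputable def T (N : ℕ) : ℝ := ∑ n ∈ Finset.Icc 1 N, Λ n * ((N / n : ℕ) : ℝ)

lemma T_eq (N : ℕ) : T N = Real.log (Nat.factorial N) := by
  have h1 : Real.log (Nat.factorial N) = ∑ m ∈ Finset.Icc 1 N, Real.log m := by
    induction N with
    | zero => simp
    | succ n ih =>
      rw [Finset.sum_Icc_succ_top (by omega), ← ih, Nat.factorial_succ, Nat.cast_mul,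
        Real.log_mul (by positivity) (by positivity)]
      ring
  have h2 : ∀ m ∈ Finset.Icc 1 N, Real.log m = ∑ d ∈ Finset.Icc 1 N, if d ∣ m then Λ d else 0 := by
    intro m hm
    simp only [Finset.mem_Icc] at hm
    rw [← vonMangoldt_sum (n := m), ← Finset.sum_filter]
    congr 1
    ext d
    simp only [Finset.mem_filter, Finset.mem_Icc, Nat.mem_divisors]
    constructor
    · rintro ⟨hdm, _⟩
      exact ⟨⟨Nat.pos_of_dvd_of_pos hdm (by omega), le_trans (Nat.le_of_dvd (by omega) hdm) hm.2⟩, hdm⟩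
    · rintro ⟨⟨h1d, h2d⟩, hdm⟩; exact ⟨hdm, by omega⟩
  rw [h1, Finset.sum_congr rfl h2, Finset.sum_comm, T]
  apply Finset.sum_congr rfl
  intro n hn
  rw [← Finset.sum_filter, Finset.sum_const, nsmul_eq_mul, mul_comm]
  congr 2
  have : Finset.Icc 1 N = Finset.Ioc 0 N := rfl
  rw [this, ← Nat.Ioc_filter_dvd_card_eq_div]


-- log x ≥ 1 - 1/x for x > 0
lemma log_ge (x : ℝ) (hx : 0 < x) : 1 - 1/x ≤ Real.log x := by
  have h := Real.log_le_sub_one_of_pos (x := 1/x) (by positivity)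
  rw [Real.log_div one_ne_zero (ne_of_gt hx), Real.log_one] at h
  have : (1:ℝ)/x - 1 = 1/x - 1 := rfl
  linarith

lemma stirling_lower (N : ℕ) (hN : 1 ≤ N) :
    (N:ℝ) * Real.log N - N + 1 ≤ Real.log (Nat.factorial N) := by
  induction N with
  | zero => omega
  | succ n ih =>
    rcases Nat.eq_or_lt_of_le hN with h | h
    · simp [← h]
    · have hn : 1 ≤ n := by omega
      have ihn := ih hn
      have hnp : (0:ℝ) < n := by positivity
      have hnp1 : (0:ℝ) < (n:ℝ) + 1 := by positivity
      rw [Nat.factorial_succ, Nat.cast_mul, Real.log_mul (by positivity) (by positivity)]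
      push_cast
      have key : (n:ℝ) * Real.log ((n+1)/n) ≤ 1 := by
        have := Real.log_le_sub_one_of_pos (x := ((n:ℝ)+1)/n) (by positivity)
        have h2 : ((n:ℝ)+1)/n - 1 = 1/n := by field_simp; ring
        rw [h2] at this
        calc (n:ℝ) * Real.log ((n+1)/n) ≤ (n:ℝ) * (1/n) := by
              apply mul_le_mul_of_nonneg_left this (le_of_lt hnp)
          _ = 1 := by field_simp
      rw [Real.log_div (by positivity) (ne_of_gt hnp)] at key
      nlinarith [key, ihn]

lemma stirling_upper (N : ℕ) (hN : 1 ≤ N) :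
    Real.log (Nat.factorial N) ≤ (N:ℝ) * Real.log N - N + 1 + Real.log N := by
  induction N with
  | zero => omega
  | succ n ih =>
    rcases Nat.eq_or_lt_of_le hN with h | h
    · simp [← h]
    · have hn : 1 ≤ n := by omega
      have ihn := ih hn
      have hnp : (0:ℝ) < n := by positivity
      rw [Nat.factorial_succ, Nat.cast_mul, Real.log_mul (by positivity) (by positivity)]
      push_cast
      -- need: log n! + log(n+1) ≤ (n+1) log(n+1) - n + log(n+1)
      -- from IH: suffices n log n + log n + 1 ≤ (n+1) log (n+1)
      have key : (n:ℝ) * Real.log n + Real.log n + 1 ≤ ((n:ℝ)+1) * Real.log ((n:ℝ)+1) := by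
        have hlog : Real.log (((n:ℝ)+1)/n) ≥ 1/((n:ℝ)+1) := by
          have := log_ge (((n:ℝ)+1)/n) (by positivity)
          have h2 : 1 - 1/(((n:ℝ)+1)/n) = 1/((n:ℝ)+1) - 0 := by
            rw [one_div_div]; field_simp; ring
          linarith [this, h2.ge]
        rw [Real.log_div (by positivity) (ne_of_gt hnp)] at hlog
        have hmul : ((n:ℝ)+1) * (Real.log ((n:ℝ)+1) - Real.log n) ≥ ((n:ℝ)+1) * (1/((n:ℝ)+1)) :=
          mul_le_mul_of_nonneg_left hlog (by positivity)
        rw [mul_one_div, div_self (by positivity)] at hmul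
        nlinarith [hmul]
      nlinarith [key, ihn]

-- h(t) = t log t - t increments
lemma h_diff_upper (u v : ℝ) (hu : 1 ≤ u) (huv : u ≤ v) :
    v * Real.log v - v - (u * Real.log u - u) ≤ (v - u) * Real.log v := by
  have hup : (0:ℝ) < u := by linarith
  have hvp : (0:ℝ) < v := by linarith
  have hl : Real.log v - Real.log u ≤ (v - u)/u := by
    have := Real.log_le_sub_one_of_pos (x := v/u) (by positivity)
    rw [Real.log_div (ne_of_gt hvp) (ne_of_gt hup)] at this
    have : Real.log v - Real.log u ≤ v/u - 1 := this
    have h2 : v/u - 1 = (v-u)/u := by field_simp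
    linarith [h2 ▸ this]
  have := mul_le_mul_of_nonneg_left hl (le_of_lt hup)
  rw [mul_div_cancel₀ _ (ne_of_gt hup)] at this
  nlinarith
lemma h_diff_lower (u v : ℝ) (hu : 1 ≤ u) (huv : u ≤ v) :
    (v - u) * Real.log u ≤ v * Real.log v - v - (u * Real.log u - u) := by
  have hup : (0:ℝ) < u := by linarith
  have hvp : (0:ℝ) < v := by linarith
  have hl : Real.log v - Real.log u ≥ (v - u)/v := by
    have := log_ge (v/u) (by positivity)
    rw [Real.log_div (ne_of_gt hvp) (ne_of_gt hup)] at this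
    have h2 : 1 - 1/(v/u) = (v - u)/v := by rw [one_div_div]; field_simp
    linarith [h2 ▸ this]
  have := mul_le_mul_of_nonneg_left hl (le_of_lt hvp)
  rw [mul_div_cancel₀ _ (ne_of_gt hvp)] at this
  nlinarith



noncomputable def S (N : ℕ) : ℝ := ∑ n ∈ Finset.Icc 1 N, Λ n * ((eE (N/n) : ℤ) : ℝ)

lemma T_div (N k : ℕ) (hk : 1 ≤ k) :
    T (N/k) = ∑ n ∈ Finset.Icc 1 N, Λ n * ((N / n / k : ℕ) : ℝ) := by
  rw [T]
  have hsub : Finset.Icc 1 (N/k) ⊆ Finset.Icc 1 N := by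
    apply Finset.Icc_subset_Icc le_rfl (Nat.div_le_self N k)
  rw [Finset.sum_subset hsub]
  · apply Finset.sum_congr rfl
    intro n hn
    congr 2
    rw [Nat.div_div_eq_div_mul, Nat.div_div_eq_div_mul, mul_comm]
  · intro n hn hn2
    simp only [Finset.mem_Icc] at hn hn2
    have : N / k < n := by omega
    rw [Nat.div_eq_of_lt this]; simp
  done

lemma S_eq (N : ℕ) : S N = T N - T (N/2) - T (N/3) - T (N/5) + T (N/30) := by
  rw [S, T, T_div N 2 (by norm_num), T_div N 3 (by norm_num), T_div N 5 (by norm_num),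
    T_div N 30 (by norm_num), ← Finset.sum_sub_distrib, ← Finset.sum_sub_distrib,
    ← Finset.sum_sub_distrib, ← Finset.sum_add_distrib]
  apply Finset.sum_congr rfl
  intro n hn
  simp only [eE, Int.cast_add, Int.cast_sub, Int.cast_natCast]
  ring

lemma logfac_div_bounds (N k : ℕ) (hk : 1 ≤ k) (hkN : k ≤ N) :
    ((N:ℝ)/k) * Real.log ((N:ℝ)/k) - (N:ℝ)/k + 1 - Real.log ((N:ℝ)/k)
      ≤ Real.log (Nat.factorial (N/k)) ∧
    Real.log (Nat.factorial (N/k)) ≤ ((N:ℝ)/k) * Real.log ((N:ℝ)/k) - (N:ℝ)/k + 1 + Real.log ((N:ℝ)/k) := by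
  set b : ℕ := N/k with hb
  have hb1 : 1 ≤ b := (Nat.one_le_div_iff (by omega)).mpr hkN
  set x : ℝ := (N:ℝ)/k with hx
  have hbx : (b:ℝ) ≤ x := Nat.cast_div_le
  have hxb1 : x ≤ (b:ℝ) + 1 := by
    have h1 : N < k * (N/k) + k := by
      have := Nat.div_add_mod N k
      have := Nat.mod_lt N (show 0 < k by omega)
      omega
    have h1' : (N:ℝ) < k * b + k := by rw [hb]; exact_mod_cast h1
    rw [hx, div_le_iff₀ (by positivity : (0:ℝ) < (k:ℝ))]
    nlinarith [h1']
  have hb1' : (1:ℝ) ≤ (b:ℝ) := by exact_mod_cast hb1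
  have hx1 : (1:ℝ) ≤ x := le_trans hb1' hbx
  have hdu := h_diff_upper (b:ℝ) x hb1' hbx
  have hdl := h_diff_lower (b:ℝ) x hb1' hbx
  have hlogbx : Real.log b ≤ Real.log x := Real.log_le_log (by positivity) hbx
  have hlogx0 : 0 ≤ Real.log x := Real.log_nonneg hx1
  have hsl := stirling_lower b hb1
  have hsu := stirling_upper b hb1
  constructor
  · -- lower: log b! ≥ h(b)+1 ≥ h(x) - (x-b) log x + 1 ≥ h(x) + 1 - log x
    have h2 : (x - (b:ℝ)) * Real.log x ≤ Real.log x := by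
      nlinarith [hlogx0]
    nlinarith
  · have h3 : 0 ≤ (x - (b:ℝ)) * Real.log (b:ℝ) := by
      have : 0 ≤ Real.log (b:ℝ) := Real.log_nonneg hb1'
      nlinarith
    nlinarith

noncomputable def constA : ℝ := Real.log 2/2 + Real.log 3/3 + Real.log 5/5 - Real.log 30/30


lemma S_bounds (N : ℕ) (hN : 30 ≤ N) (S : ℝ)
    (hS : S = Real.log (Nat.factorial N) - Real.log (Nat.factorial (N/2))
      - Real.log (Nat.factorial (N/3)) - Real.log (Nat.factorial (N/5)) + Real.log (Nat.factorial (N/30))) :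
    constA * N - 1 - 4 * Real.log N ≤ S ∧ S ≤ constA * N + 5 * Real.log N := by
  have hN0 : (0:ℝ) < N := by positivity
  have hN1 : (1:ℝ) ≤ (N:ℝ) := by exact_mod_cast (by omega : 1 ≤ N)
  have h2 := logfac_div_bounds N 2 (by norm_num) (by omega)
  have h3 := logfac_div_bounds N 3 (by norm_num) (by omega)
  have h5 := logfac_div_bounds N 5 (by norm_num) (by omega)
  have h30 := logfac_div_bounds N 30 (by norm_num) (by omega)
  have hsl := stirling_lower N (by omega)
  have hsu := stirling_upper N (by omega)
  have hl2 : Real.log ((N:ℝ)/2) = Real.log N - Real.log 2 := Real.log_div (ne_of_gt hN0) (by norm_num)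
  have hl3 : Real.log ((N:ℝ)/3) = Real.log N - Real.log 3 := Real.log_div (ne_of_gt hN0) (by norm_num)
  have hl5 : Real.log ((N:ℝ)/5) = Real.log N - Real.log 5 := Real.log_div (ne_of_gt hN0) (by norm_num)
  have hl30 : Real.log ((N:ℝ)/30) = Real.log N - Real.log 30 := Real.log_div (ne_of_gt hN0) (by norm_num)
  obtain ⟨h2l, h2u⟩ := h2
  obtain ⟨h3l, h3u⟩ := h3
  obtain ⟨h5l, h5u⟩ := h5
  obtain ⟨h30l, h30u⟩ := h30
  push_cast at h2l h2u h3l h3u h5l h5u h30l h30u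
  rw [hl2] at h2l h2u
  rw [hl3] at h3l h3u
  rw [hl5] at h5l h5u
  rw [hl30] at h30l h30u
  -- log N ≥ log 30 ≥ log k ≥ 0 for k = 2,3,5,30
  have hlN30 : Real.log 30 ≤ Real.log N := Real.log_le_log (by norm_num) (by exact_mod_cast hN)
  have hlog2 : (0:ℝ) ≤ Real.log 2 := Real.log_nonneg (by norm_num)
  have hlog3 : Real.log 2 ≤ Real.log 3 := Real.log_le_log (by norm_num) (by norm_num)
  have hlog5 : Real.log 3 ≤ Real.log 5 := Real.log_le_log (by norm_num) (by norm_num)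
  have hlog30 : Real.log 5 ≤ Real.log 30 := Real.log_le_log (by norm_num) (by norm_num)
  rw [hS, constA]
  ring_nf at h2l h2u h3l h3u h5l h5u h30l h30u hsl hsu ⊢
  constructor <;> linarith [hsl, hsu, h2l, h2u, h3l, h3u, h5l, h5u, h30l, h30u]



noncomputable def psi (N : ℕ) : ℝ := ∑ n ∈ Finset.Icc 1 N, Λ n
def PiN (N : ℕ) : ℕ := ((Finset.Icc 1 N).filter Nat.Prime).card

lemma inner_bound (N p : ℕ) (hN : 1 ≤ N) (hp : p.Prime) :
    ∑ n ∈ (Finset.Icc 1 N).filter (fun n => n.minFac = p), Λ n ≤ Real.log N := by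
  rw [← Finset.sum_filter_of_ne (p := fun n => IsPrimePow n)
    (by intro x hx hne; by_contra hc; exact hne (vonMangoldt_eq_zero_iff.mpr hc))]
  set F := ((Finset.Icc 1 N).filter (fun n => n.minFac = p)).filter (fun n => IsPrimePow n) with hF
  have hsub : F ⊆ (Finset.Icc 1 (Nat.log p N)).image (p ^ ·) := by
    intro n hn
    simp only [hF, Finset.mem_filter, Finset.mem_Icc] at hn
    obtain ⟨⟨⟨h1n, h2n⟩, hmf⟩, hpp⟩ := hn
    obtain ⟨q, k, hq, hk, rfl⟩ := hpp
    rw [Nat.Prime.pow_minFac hq.nat_prime (by omega)] at hmf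
    subst hmf
    simp only [Finset.mem_image, Finset.mem_Icc]
    exact ⟨k, ⟨by omega, (Nat.le_log_iff_pow_le hp.one_lt (by omega)).mpr h2n⟩, rfl⟩
  have hterm : ∀ n ∈ F, Λ n = Real.log p := by
    intro n hn
    simp only [hF, Finset.mem_filter] at hn
    rw [vonMangoldt_apply, if_pos hn.2, hn.1.2]
  rw [Finset.sum_congr rfl hterm, Finset.sum_const, nsmul_eq_mul]
  have hcard : F.card ≤ Nat.log p N := by
    calc F.card ≤ _ := Finset.card_le_card hsub
      _ ≤ (Finset.Icc 1 (Nat.log p N)).card := Finset.card_image_le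
      _ = Nat.log p N := by rw [Nat.card_Icc]; omega
  calc (F.card : ℝ) * Real.log p ≤ (Nat.log p N : ℝ) * Real.log p := by
        apply mul_le_mul_of_nonneg_right _ (Real.log_nonneg (by exact_mod_cast hp.one_lt.le))
        exact_mod_cast hcard
    _ = Real.log ((p : ℝ) ^ (Nat.log p N)) := by rw [Real.log_pow]
    _ ≤ Real.log N := by
        apply Real.log_le_log (by exact_mod_cast pow_pos (by exact_mod_cast hp.pos : (0:ℝ) < p) _)
        exact_mod_cast Nat.pow_log_le_self p (by omega)

lemma psi_le (N : ℕ) (hN : 1 ≤ N) : psi N ≤ (PiN N : ℝ) * Real.log N := by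
  rw [psi, ← Finset.sum_fiberwise_of_maps_to (g := fun n => n.minFac) (t := Finset.Icc 1 N)
    (by intro x hx; simp only [Finset.mem_Icc] at hx ⊢
        exact ⟨Nat.minFac_pos x, le_trans (Nat.minFac_le (by omega)) hx.2⟩)]
  calc ∑ p ∈ Finset.Icc 1 N, ∑ n ∈ (Finset.Icc 1 N).filter (fun n => n.minFac = p), Λ n
      ≤ ∑ p ∈ Finset.Icc 1 N, (if p.Prime then Real.log N else 0) := by
        apply Finset.sum_le_sum
        intro p hp
        by_cases hpp : p.Prime
        · rw [if_pos hpp]; exact inner_bound N p hN hpp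
        · rw [if_neg hpp]
          apply le_of_eq
          apply Finset.sum_eq_zero
          intro n hn
          simp only [Finset.mem_filter] at hn
          rw [vonMangoldt_apply]
          split
          · next h =>
              exfalso
              obtain ⟨q, k, hq, hk, rfl⟩ := h
              rw [Nat.Prime.pow_minFac hq.nat_prime (by omega)] at hn
              exact hpp (hn.2 ▸ hq.nat_prime)
          · rfl
    _ = (PiN N : ℝ) * Real.log N := by
        rw [← Finset.sum_filter, Finset.sum_const, nsmul_eq_mul, PiN]

lemma exp_two_bounds : (7.38:ℝ) ≤ Real.exp 2 ∧ Real.exp 2 ≤ 30 := by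
  have h1 := Real.exp_one_lt_d9
  have h2 := Real.exp_one_gt_d9
  have he : Real.exp 2 = Real.exp 1 * Real.exp 1 := by
    rw [← Real.exp_add]; norm_num
  constructor <;> nlinarith [Real.exp_pos 1]

lemma S_term_nonneg (N n : ℕ) : 0 ≤ Λ n * ((eE (N/n) : ℤ) : ℝ) := by
  apply mul_nonneg vonMangoldt_nonneg
  rcases eE01 (N/n) with h | h <;> rw [h] <;> norm_num

lemma pi_step (N : ℕ) (hN : 30 ≤ N) :
    ((PiN N : ℝ) - (PiN (N/6) : ℝ)) * (Real.log N - 2) ≤ S N := by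
  have hN0 : (0:ℝ) < N := by positivity
  set P : Finset ℕ := (Finset.Ioc (N/6) N).filter Nat.Prime with hP
  have hcount : (PiN N : ℝ) - (PiN (N/6) : ℝ) ≤ (P.card : ℝ) := by
    have hsplit : Finset.Icc 1 N = Finset.Icc 1 (N/6) ∪ Finset.Ioc (N/6) N := by
      ext a; simp only [Finset.mem_union, Finset.mem_Icc, Finset.mem_Ioc]; omega
    have h1 : PiN N ≤ PiN (N/6) + P.card := by
      rw [PiN, hsplit, Finset.filter_union]
      exact Finset.card_union_le _ _
    have h2 : ((PiN N : ℕ) : ℝ) ≤ ((PiN (N/6) + P.card : ℕ) : ℝ) := by exact_mod_cast h1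
    push_cast at h2
    linarith
  have hterm : ∀ p ∈ P, Real.log N - 2 ≤ Λ p * ((eE (N/p) : ℤ) : ℝ) := by
    intro p hp
    simp only [hP, Finset.mem_filter, Finset.mem_Ioc] at hp
    obtain ⟨⟨hp1, hp2⟩, hprime⟩ := hp
    have h6 : N < 6 * p := by omega
    have he : eE (N/p) = 1 := by
      apply eE_small
      · exact (Nat.one_le_div_iff hprime.pos).mpr hp2
      · have : N / p < 6 := (Nat.div_lt_iff_lt_mul hprime.pos).mpr (by omega)
        omega
    rw [he, vonMangoldt_apply_prime hprime]
    push_cast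
    rw [mul_one]
    have hle : (N:ℝ) ≤ (p:ℝ) * Real.exp 2 := by
      have h6' : (N:ℝ) < 6 * p := by exact_mod_cast h6
      have hp0 : (0:ℝ) < p := by exact_mod_cast hprime.pos
      nlinarith [exp_two_bounds.1]
    have := Real.log_le_log hN0 hle
    rw [Real.log_mul (by exact_mod_cast hprime.pos.ne') (Real.exp_ne_zero 2), Real.log_exp] at this
    linarith
  have hsubset : P ⊆ Finset.Icc 1 N := by
    intro p hp
    simp only [hP, Finset.mem_filter, Finset.mem_Ioc] at hp
    simp only [Finset.mem_Icc]
    exact ⟨hp.2.one_lt.le, hp.1.2⟩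
  calc ((PiN N : ℝ) - (PiN (N/6) : ℝ)) * (Real.log N - 2)
      ≤ (P.card : ℝ) * (Real.log N - 2) := by
        have h : (0:ℝ) ≤ Real.log N - 2 := by
          have : (2:ℝ) ≤ Real.log N := (Real.le_log_iff_exp_le hN0).mpr
            (le_trans exp_two_bounds.2 (by exact_mod_cast hN))
          linarith
        exact mul_le_mul_of_nonneg_right hcount h
    _ = ∑ _p ∈ P, (Real.log N - 2) := by rw [Finset.sum_const, nsmul_eq_mul]
    _ ≤ ∑ p ∈ P, Λ p * ((eE (N/p) : ℤ) : ℝ) := Finset.sum_le_sum hterm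
    _ ≤ S N := Finset.sum_le_sum_of_subset_of_nonneg hsubset
        (fun n _ _ => S_term_nonneg N n)




lemma log30_eq : Real.log 30 = Real.log 2 + Real.log 3 + Real.log 5 := by
  rw [show (30:ℝ) = 2*3*5 by norm_num, Real.log_mul (by norm_num) (by norm_num),
    Real.log_mul (by norm_num) (by norm_num)]

lemma constA_eq : constA = (14*Real.log 2 + 9*Real.log 3 + 5*Real.log 5)/30 := by
  rw [constA, log30_eq]; ring

lemma log_combo_eq : 14*Real.log 2 + 9*Real.log 3 + 5*Real.log 5 = Real.log 1007769600000 := by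
  rw [show (1007769600000:ℝ) = 2^14*3^9*5^5 by norm_num,
    Real.log_mul (by positivity) (by positivity), Real.log_mul (by positivity) (by positivity),
    Real.log_pow, Real.log_pow, Real.log_pow]
  push_cast; ring

lemma exp_pow_ge (c : ℝ) (hc : 0 ≤ c) (h : c < Real.exp 1) (n : ℕ) : c^n ≤ Real.exp n := by
  calc c^n ≤ (Real.exp 1)^n := pow_le_pow_left₀ hc h.le n
    _ = Real.exp n := by rw [← Real.exp_nat_mul]; ring_nf

lemma constA_le : constA ≤ 14/15 := by
  rw [constA_eq, log_combo_eq]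
  have h : Real.log 1007769600000 ≤ 28 := by
    rw [Real.log_le_iff_le_exp (by norm_num)]
    calc (1007769600000:ℝ) ≤ 2.7182818283^(28:ℕ) := by norm_num
      _ ≤ Real.exp 28 := by
          have := exp_pow_ge 2.7182818283 (by norm_num) Real.exp_one_gt_d9 28
          exact_mod_cast this
  linarith

lemma constA_ge : Real.log 2 + 1/5 ≤ constA := by
  rw [constA_eq]
  -- 30*constA - 30 log 2 = -16 log2 + 9 log3 + 5 log5 = log (3^9*5^5) - log (2^16) ≥ 6
  have key : Real.log (65536:ℝ) + 6 ≤ Real.log (61509375:ℝ) := by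
    have h1 : Real.log (65536:ℝ) + 6 = Real.log (65536 * Real.exp 6) := by
      rw [Real.log_mul (by norm_num) (Real.exp_ne_zero 6), Real.log_exp]
    rw [h1]
    apply Real.log_le_log (by positivity)
    have he : Real.exp 6 ≤ 2.7182818286^(6:ℕ) := by
      calc Real.exp 6 = (Real.exp 1)^(6:ℕ) := by rw [← Real.exp_nat_mul]; norm_num
        _ ≤ 2.7182818286^(6:ℕ) := pow_le_pow_left₀ (Real.exp_pos 1).le Real.exp_one_lt_d9.le 6
    nlinarith [he]
  have h2 : Real.log (65536:ℝ) = 16 * Real.log 2 := by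
    rw [show (65536:ℝ) = 2^16 by norm_num, Real.log_pow]; push_cast; ring
  have h3 : Real.log (61509375:ℝ) = 9*Real.log 3 + 5*Real.log 5 := by
    rw [show (61509375:ℝ) = 3^9*5^5 by norm_num, Real.log_mul (by positivity) (by positivity),
      Real.log_pow, Real.log_pow]
    push_cast; ring
  rw [h2, h3] at key
  linarith

-- derived S bounds
lemma S_fac (N : ℕ) : S N = Real.log (Nat.factorial N) - Real.log (Nat.factorial (N/2))
    - Real.log (Nat.factorial (N/3)) - Real.log (Nat.factorial (N/5)) + Real.log (Nat.factorial (N/30)) := by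
  rw [S_eq, T_eq, T_eq, T_eq, T_eq, T_eq]

lemma S_upper (N : ℕ) (hN : 30 ≤ N) : S N ≤ (14/15 : ℝ) * N + 5 * Real.log N := by
  have h := (S_bounds N hN (S N) (S_fac N)).2
  have hA := constA_le
  have hN0 : (0:ℝ) ≤ N := by positivity
  nlinarith

lemma S_lower (N : ℕ) (hN : 30 ≤ N) :
    (Real.log 2 + 1/5) * N - 1 - 4 * Real.log N ≤ S N := by
  have h := (S_bounds N hN (S N) (S_fac N)).1
  have hA := constA_ge
  have hN0 : (0:ℝ) ≤ N := by positivity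
  nlinarith

lemma cube_le_exp (t : ℝ) (ht : 0 ≤ t) : t^3/27 ≤ Real.exp t := by
  have h := Real.add_one_le_exp (t/3)
  have h3 : Real.exp t = (Real.exp (t/3))^3 := by
    rw [← Real.exp_nat_mul]; congr 1; push_cast; ring
  have : (t/3)^3 ≤ (t/3+1)^3 := by nlinarith
  rw [h3]
  calc t^3/27 = (t/3)^3 := by ring
    _ ≤ (t/3+1)^3 := this
    _ ≤ (Real.exp (t/3))^3 := pow_le_pow_left₀ (by linarith) h 3

lemma PiN_le_self (N : ℕ) : (PiN N : ℝ) ≤ N := by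
  have : PiN N ≤ N := by
    calc PiN N ≤ (Finset.Icc 1 N).card := Finset.card_filter_le _ _
      _ = N := by rw [Nat.card_Icc]; omega
  exact_mod_cast this

lemma log_nat_nonneg (N : ℕ) : 0 ≤ Real.log N := by
  rcases Nat.eq_zero_or_pos N with h | h
  · simp [h]
  · exact Real.log_nonneg (by exact_mod_cast h)

lemma upper_pi : ∀ N : ℕ, (PiN N : ℝ) ≤ Real.exp 75 + 1.2 * N / Real.log N := by
  intro N
  induction N using Nat.strong_induction_on with
  | _ N ih =>
  rcases lt_or_ge (N : ℝ) (Real.exp 75) with hsmall | hbig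
  · have h0 : 0 ≤ 1.2 * (N:ℝ) / Real.log N :=
      div_nonneg (by positivity) (log_nat_nonneg N)
    linarith [PiN_le_self N]
  -- big case
  have hN1 : 1 ≤ N := by
    by_contra h
    push_neg at h
    interval_cases N
    · simp at hbig; linarith [Real.exp_pos (75:ℝ)]
  have hN0 : (0:ℝ) < N := by positivity
  set L := Real.log N with hL
  have hexpL : Real.exp L = N := Real.exp_log hN0
  have hL75 : 75 ≤ L := by
    rw [hL, ← Real.log_exp (75:ℝ)]
    exact Real.log_le_log (Real.exp_pos _) hbig
  have hN30 : 30 ≤ N := by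
    by_contra h
    push_neg at h
    have : (N:ℝ) < 30 := by exact_mod_cast h
    linarith [Real.add_one_le_exp (75:ℝ)]
  have hNL : 2 * L^2 ≤ (N:ℝ) := by
    have := cube_le_exp L (by linarith)
    rw [hexpL] at this
    nlinarith
  -- N/6 facts
  set M := N / 6 with hM
  have hM1 : 1 ≤ M := by omega
  have hM0 : (0:ℝ) < M := by positivity
  have hMle : (M:ℝ) ≤ (N:ℝ)/6 := by
    rw [hM]; exact_mod_cast Nat.cast_div_le
  have hMge : (N:ℝ)/Real.exp 2 ≤ (M:ℝ) := by
    have h1 : (6:ℝ) * M ≥ (N:ℝ) - 5 := by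
      have hn : 6 * M + 5 ≥ N := by omega
      have hn' : (6:ℝ) * M + 5 ≥ (N:ℝ) := by exact_mod_cast hn
      linarith
    have he := exp_two_bounds.1
    rw [div_le_iff₀ (by positivity : (0:ℝ) < Real.exp 2)]
    -- N ≤ M * exp 2 ⟸ N ≤ 7.38 M ⟸ 7.38M ≥ 7.38(N-5)/6 = 1.23(N-5) ≥ N for N ≥ 27
    have hM38 : (M:ℝ) ≥ ((N:ℝ)-5)/6 := by linarith
    have hNr : (30:ℝ) ≤ N := by exact_mod_cast hN30
    nlinarith [he, hM38, hNr]
  have hlogM : L - 2 ≤ Real.log M := by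
    calc L - 2 = Real.log ((N:ℝ)/Real.exp 2) := by
          rw [Real.log_div (ne_of_gt hN0) (Real.exp_ne_zero 2), Real.log_exp]
      _ ≤ Real.log M := Real.log_le_log (by positivity) hMge
  have hL2pos : (0:ℝ) < L - 2 := by linarith
  -- step inequality
  have hstep : (PiN N : ℝ) ≤ (PiN M : ℝ) + S N / (L - 2) := by
    have h := pi_step N hN30
    rw [← hM] at h
    have h2 : (PiN N : ℝ) - (PiN M : ℝ) ≤ S N / (L - 2) := (le_div_iff₀ hL2pos).mpr h
    linarith
  have hSN := S_upper N hN30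
  have hihM := ih M (by omega)
  have hratio : 1.2 * (M:ℝ) / Real.log M ≤ 1.2 * ((N:ℝ)/6) / (L - 2) := by
    apply div_le_div₀ (by positivity) (by linarith) hL2pos hlogM
  have h1 : S N / (L-2) ≤ ((14/15)*(N:ℝ) + 5*L)/(L-2) := by gcongr
  have halg : 1.2*((N:ℝ)/6)/(L-2) + ((14/15)*(N:ℝ) + 5*L)/(L-2) = ((17/15)*(N:ℝ) + 5*L)/(L-2) := by
    ring
  have hfinal : ((17/15)*(N:ℝ) + 5*L)/(L-2) ≤ 1.2 * (N:ℝ) / L := by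
    rw [div_le_div_iff₀ hL2pos (by linarith : (0:ℝ) < L)]
    nlinarith [hNL, hL75, hN0]
  linarith [hstep, hihM, hratio, h1, halg, hfinal]


lemma S_le_psi (N : ℕ) : S N ≤ psi N := by
  rw [S, psi]
  apply Finset.sum_le_sum
  intro n hn
  rcases eE01 (N/n) with h | h <;> rw [h] <;> simp [vonMangoldt_nonneg]

end Cheb


set_option maxHeartbeats 1000000 in
theorem stmt_10 :
    ∃ X : ℝ, ∀ x : ℝ, X ≤ x →
      Real.log 2 * x / Real.log x < (primePi x : ℝ) ∧
      (primePi x : ℝ) < (2 * Real.log 2) * x / Real.log x := by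
  use Real.exp 200
  intro x hx
  have hexp200 : (201:ℝ) ≤ Real.exp 200 := by
    linarith [Real.add_one_le_exp (200:ℝ)]
  have hx1 : (1:ℝ) < x := by linarith
  have hx0 : (0:ℝ) < x := by linarith
  have hLX : (200:ℝ) ≤ Real.log x := by
    rw [← Real.log_exp (200:ℝ)]
    exact Real.log_le_log (Real.exp_pos _) hx
  have hLXpos : (0:ℝ) < Real.log x := by linarith
  set N := ⌊x⌋₊ with hNdef
  have hNx : (N:ℝ) ≤ x := Nat.floor_le hx0.le
  have hxN : x < (N:ℝ) + 1 := Nat.lt_floor_add_one x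
  have hNge : x - 1 ≤ (N:ℝ) := by linarith
  have hNpos : (0:ℝ) < (N:ℝ) := by linarith
  have hN1 : 1 ≤ N := by exact_mod_cast Nat.one_le_iff_ne_zero.mpr (by
    intro h; rw [h] at hNpos; simp at hNpos)
  have hN30 : 30 ≤ N := by
    by_contra h
    push_neg at h
    have : (N:ℝ) < 30 := by exact_mod_cast h
    linarith
  have hpieq : primePi x = Cheb.PiN N := rfl
  set LN := Real.log (N:ℝ) with hLN
  have hexpLN : Real.exp LN = (N:ℝ) := Real.exp_log hNpos
  have hLNle : LN ≤ Real.log x := Real.log_le_log hNpos hNx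
  have hLN100 : (100:ℝ) ≤ LN := by
    have h1 : Real.exp 100 ≤ (N:ℝ) := by
      have h2 : Real.exp 200 = Real.exp 100 * Real.exp 100 := by
        rw [← Real.exp_add]; norm_num
      have h3 : (101:ℝ) ≤ Real.exp 100 := by linarith [Real.add_one_le_exp (100:ℝ)]
      nlinarith [Real.exp_pos (100:ℝ)]
    rw [hLN, ← Real.log_exp (100:ℝ)]
    exact Real.log_le_log (Real.exp_pos _) h1
  have hLNpos : (0:ℝ) < LN := by linarith
  have hNcube : LN^3/27 ≤ (N:ℝ) := by
    have := Cheb.cube_le_exp LN (by linarith)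
    rwa [hexpLN] at this
  have hlog2u : Real.log 2 < 0.6931471808 := Real.log_two_lt_d9
  have hlog2l : (0.6931471803:ℝ) < Real.log 2 := Real.log_two_gt_d9
  constructor
  · -- lower bound
    have h1 := Cheb.psi_le N hN1
    have h2 := Cheb.S_le_psi N
    have h3 := Cheb.S_lower N hN30
    have hmargin : Real.log 2 * x < (Real.log 2 + 1/5) * N - 1 - 4 * LN := by
      have hlx : Real.log 2 * x ≤ Real.log 2 * ((N:ℝ)+1) := by nlinarith
      -- N/5 ≥ 74*LN since N ≥ LN^3/27 ≥ (100^2/27)·LN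
      have hbigN : 370 * LN ≤ (N:ℝ) := by
        have h100 : (0:ℝ) ≤ LN - 100 := by linarith
        have hcub : 10000 * LN ≤ LN^3 := by
          nlinarith [mul_nonneg (mul_nonneg h100 hLNpos.le) (by linarith : (0:ℝ) ≤ LN + 100)]
        linarith [hNcube]
      nlinarith
    have hchain : Real.log 2 * x < (Cheb.PiN N : ℝ) * Real.log x := by
      have hmono : (Cheb.PiN N : ℝ) * LN ≤ (Cheb.PiN N : ℝ) * Real.log x := by
        have : (0:ℝ) ≤ (Cheb.PiN N : ℝ) := by positivity
        nlinarith
      rw [← hLN] at h1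
      linarith
    rw [hpieq, div_lt_iff₀ hLXpos]
    linarith
  · -- upper bound
    have h4 := Cheb.upper_pi N
    have hLNx : Real.log x - 1 ≤ LN := by
      have hxe : x / Real.exp 1 ≤ (N:ℝ) := by
        have he1 : (2:ℝ) ≤ Real.exp 1 := by linarith [Real.add_one_le_exp (1:ℝ)]
        rw [div_le_iff₀ (Real.exp_pos 1)]
        have hmm : (x-1) * 2 ≤ (N:ℝ) * Real.exp 1 :=
          mul_le_mul hNge he1 (by norm_num) (by positivity)
        linarith
      calc Real.log x - 1 = Real.log (x / Real.exp 1) := by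
            rw [Real.log_div (ne_of_gt hx0) (Real.exp_ne_zero 1), Real.log_exp]
        _ ≤ LN := Real.log_le_log (by positivity) hxe
    have hL1pos : (0:ℝ) < Real.log x - 1 := by linarith
    have h5 : 1.2 * (N:ℝ) / LN ≤ 1.2 * x / (Real.log x - 1) :=
      div_le_div₀ (by positivity) (by linarith) hL1pos hLNx
    have h6 : Real.exp 75 + 1.2 * x / (Real.log x - 1) < (2 * Real.log 2) * x / Real.log x := by
      set A := Real.exp (Real.log x - 75) with hA
      have hxeq : x = Real.exp 75 * A := by
        rw [hA, ← Real.exp_add, show (75:ℝ) + (Real.log x - 75) = Real.log x by ring,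
          Real.exp_log hx0]
      have hAcube : ((5/8)*Real.log x)^3/27 ≤ A := by
        have h58 : (5/8)*Real.log x ≤ Real.log x - 75 := by linarith
        have hc := Cheb.cube_le_exp (Real.log x - 75) (by linarith)
        rw [← hA] at hc
        have hp := pow_le_pow_left₀ (by positivity : (0:ℝ) ≤ (5/8)*Real.log x) h58 3
        linarith
      have hpos75 : (0:ℝ) < Real.exp 75 := Real.exp_pos _
      have hApos : (0:ℝ) < A := Real.exp_pos _
      have key : Real.exp 75 * (Real.log x*(Real.log x-1)) + 1.2*x*Real.log x
          < (2*Real.log 2)*x*(Real.log x-1) := by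
        have hc : (1.3862:ℝ) ≤ 2 * Real.log 2 := by linarith
        have hA18 : 1.8 * (Real.log x)^2 ≤ A := by nlinarith [hAcube, hLX]
        have hL2 : Real.exp 75 * (Real.log x*(Real.log x-1)) ≤ Real.exp 75 * (Real.log x)^2 := by
          nlinarith
        have hx35 : Real.exp 75 * (Real.log x)^2 * 35 ≤ 35 * x := by
          have hm := mul_le_mul_of_nonneg_left hA18 hpos75.le
          nlinarith [hm, hxeq, hpos75]
        have hE : Real.exp 75 * ((Real.log x)^2) ≤ x := by linarith
        have hcl : 1 + 1.2*Real.log x < (2*Real.log 2)*(Real.log x - 1) := by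
          nlinarith [mul_nonneg (by linarith : (0:ℝ) ≤ 2*Real.log 2 - 1.3862)
            (by linarith : (0:ℝ) ≤ Real.log x - 200)]
        have hmul := mul_lt_mul_of_pos_left hcl hx0
        nlinarith [hmul, hL2, hE]
      have hD : (0:ℝ) < Real.log x * (Real.log x - 1) := mul_pos hLXpos hL1pos
      have hid : 1.2 * x / (Real.log x - 1) = (1.2 * x * Real.log x) / (Real.log x*(Real.log x-1)) := by
        rw [eq_div_iff (ne_of_gt hD)]
        field_simp
      have hid2 : (2*Real.log 2)*x/Real.log x
          = ((2*Real.log 2)*x*(Real.log x-1))/(Real.log x*(Real.log x-1)) := by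
        rw [eq_div_iff (ne_of_gt hD)]
        field_simp
      have hid3 : Real.exp 75 = (Real.exp 75 * (Real.log x*(Real.log x-1)))/(Real.log x*(Real.log x-1)) := by
        rw [eq_div_iff (ne_of_gt hD)]
      rw [hid, hid2, hid3, ← add_div, div_lt_div_iff₀ hD hD]
      exact mul_lt_mul_of_pos_right key hD
    rw [hpieq]
    calc (Cheb.PiN N : ℝ) ≤ Real.exp 75 + 1.2 * (N:ℝ) / LN := h4
      _ ≤ Real.exp 75 + 1.2 * x / (Real.log x - 1) := by linarith
      _ < (2 * Real.log 2) * x / Real.log x := h6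
end

section
/- For every real x ≥ 2, π(x) ≤ Σ_{2 ≤ n ≤ x} Λ(n)/log n, and Σ_{2 ≤ n ≤ x} Λ(n)/log n = ψ(x)/log x + ∫_2^x ψ(t)/(t (log t)²) dt. -/
open Finset ArithmeticFunction

theorem stmt_13 (x : ℝ) (hx : 2 ≤ x) :
    (primePi x : ℝ) ≤
      (∑ n ∈ Finset.Icc 2 ⌊x⌋₊, ArithmeticFunction.vonMangoldt n / Real.log n) ∧
    (∑ n ∈ Finset.Icc 2 ⌊x⌋₊, ArithmeticFunction.vonMangoldt n / Real.log n) =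
      psi x / Real.log x + ∫ t in (2:ℝ)..x, psi t / (t * (Real.log t) ^ 2) := by
  have hN : 2 ≤ ⌊x⌋₊ := Nat.le_floor (by exact_mod_cast hx)
  constructor
  · have h1 : ((Finset.Icc 1 ⌊x⌋₊).filter Nat.Prime) = ((Finset.Icc 2 ⌊x⌋₊).filter Nat.Prime) := by
      ext p
      simp only [Finset.mem_filter, Finset.mem_Icc]
      constructor
      · rintro ⟨⟨_, h2⟩, hp⟩; exact ⟨⟨hp.two_le, h2⟩, hp⟩
      · rintro ⟨⟨h1, h2⟩, hp⟩; exact ⟨⟨by omega, h2⟩, hp⟩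
    rw [primePi, h1]
    calc (((Finset.Icc 2 ⌊x⌋₊).filter Nat.Prime).card : ℝ)
        = ∑ n ∈ (Finset.Icc 2 ⌊x⌋₊).filter Nat.Prime, (1:ℝ) := by simp
      _ = ∑ n ∈ (Finset.Icc 2 ⌊x⌋₊).filter Nat.Prime,
            ArithmeticFunction.vonMangoldt n / Real.log n := by
          refine Finset.sum_congr rfl fun p hp => ?_
          obtain ⟨_, hp⟩ := Finset.mem_filter.mp hp
          rw [ArithmeticFunction.vonMangoldt_apply_prime hp, div_self]
          exact ne_of_gt (Real.log_pos (by exact_mod_cast hp.one_lt))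
      _ ≤ ∑ n ∈ Finset.Icc 2 ⌊x⌋₊, ArithmeticFunction.vonMangoldt n / Real.log n := by
          refine Finset.sum_le_sum_of_subset_of_nonneg (Finset.filter_subset _ _)
            fun n hn _ => div_nonneg vonMangoldt_nonneg (Real.log_nonneg ?_)
          have := (Finset.mem_Icc.mp hn).1
          exact_mod_cast Nat.one_le_iff_ne_zero.mpr (by omega)
  · set f : ℝ → ℝ := fun t => (Real.log t)⁻¹ with hf
    have hder : ∀ t : ℝ, 2 ≤ t → HasDerivAt f (-(t⁻¹) / (Real.log t) ^ 2) t := by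
      intro t ht
      have ht0 : t ≠ 0 := by linarith
      have hlog : Real.log t ≠ 0 := ne_of_gt (Real.log_pos (by linarith))
      exact (Real.hasDerivAt_log ht0).inv hlog
    have hf_diff : ∀ t ∈ Set.Icc (2:ℝ) x, DifferentiableAt ℝ f t :=
      fun t ht => (hder t ht.1).differentiableAt
    have hderiv : ∀ t : ℝ, 2 ≤ t → deriv f t = -(t⁻¹) / (Real.log t) ^ 2 :=
      fun t ht => (hder t ht).deriv
    have hcont : ContinuousOn (fun t : ℝ => -(t⁻¹) / (Real.log t) ^ 2) (Set.Icc 2 x) := by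
      apply ContinuousOn.div
      · exact ((continuousOn_id : ContinuousOn (fun t : ℝ => t) _).inv₀ fun t ht => by
          have : (2:ℝ) ≤ t := ht.1; intro h; simp at h; linarith).neg
      · exact ((Real.continuousOn_log.mono fun t ht => by
          have : (2:ℝ) ≤ t := ht.1
          simp only [Set.mem_compl_iff, Set.mem_singleton_iff]
          intro h; rw [h] at this; linarith).pow 2)
      · intro t ht
        have : (2:ℝ) ≤ t := ht.1
        exact pow_ne_zero 2 (ne_of_gt (Real.log_pos (by linarith)))
    have hf_int : MeasureTheory.IntegrableOn (deriv f) (Set.Icc (2:ℝ) x) :=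
      (hcont.integrableOn_Icc).congr_fun (fun t ht => (hderiv t ht.1).symm) measurableSet_Icc
    have habel := sum_mul_eq_sub_sub_integral_mul (fun n => (vonMangoldt n : ℝ))
      (by norm_num : (0:ℝ) ≤ 2) hx hf_diff hf_int
    have h2 : ⌊(2:ℝ)⌋₊ = 2 := by norm_num
    rw [h2] at habel
    have hsum : ∀ m : ℕ, ∑ k ∈ Finset.Icc 0 m, (vonMangoldt k : ℝ)
        = ∑ k ∈ Finset.Icc 1 m, (vonMangoldt k : ℝ) := by
      intro m
      refine (Finset.sum_subset (Finset.Icc_subset_Icc (Nat.zero_le 1) le_rfl) ?_).symm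
      intro k hk hk'
      have : k = 0 := by
        simp only [Finset.mem_Icc] at hk hk'; omega
      simp [this]
    have h02 : ∑ k ∈ Finset.Icc 0 2, (vonMangoldt k : ℝ) = Real.log 2 := by
      rw [hsum]
      rw [show Finset.Icc 1 2 = {1, 2} by rfl]
      rw [Finset.sum_insert (by decide), Finset.sum_singleton,
        ArithmeticFunction.vonMangoldt_apply_one,
        ArithmeticFunction.vonMangoldt_apply_prime Nat.prime_two]
      norm_num
    have hlog2 : Real.log 2 ≠ 0 := ne_of_gt (Real.log_pos one_lt_two)
    have hf2 : f 2 * ∑ k ∈ Finset.Icc 0 2, (vonMangoldt k : ℝ) = 1 := by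
      rw [h02]; exact inv_mul_cancel₀ hlog2
    have hpsix : ∑ k ∈ Finset.Icc 0 ⌊x⌋₊, (vonMangoldt k : ℝ) = psi x := (hsum _).trans rfl
    have hIoc : ∫ t in Set.Ioc (2:ℝ) x, deriv f t * (∑ k ∈ Finset.Icc 0 ⌊t⌋₊, (vonMangoldt k : ℝ))
        = ∫ t in Set.Ioc (2:ℝ) x, -(psi t / (t * (Real.log t) ^ 2)) := by
      refine MeasureTheory.setIntegral_congr_fun measurableSet_Ioc fun t ht => ?_
      rw [hderiv t ht.1.le, hsum ⌊t⌋₊]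
      show -(t⁻¹) / (Real.log t) ^ 2 * psi t = -(psi t / (t * (Real.log t) ^ 2))
      rw [div_eq_mul_inv, div_eq_mul_inv, mul_inv]
      ring
    have hInt : ∫ t in (2:ℝ)..x, psi t / (t * (Real.log t) ^ 2)
        = ∫ t in Set.Ioc (2:ℝ) x, psi t / (t * (Real.log t) ^ 2) :=
      intervalIntegral.integral_of_le hx
    have hsplit : ∑ n ∈ Finset.Icc 2 ⌊x⌋₊, (vonMangoldt n : ℝ) / Real.log n
        = (vonMangoldt 2 : ℝ) / Real.log 2 + ∑ n ∈ Finset.Ioc 2 ⌊x⌋₊, (vonMangoldt n : ℝ) / Real.log n := by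
      rw [Finset.Icc_eq_cons_Ioc hN, Finset.sum_cons]
      norm_num
    have h2term : (vonMangoldt 2 : ℝ) / Real.log 2 = 1 := by
      rw [ArithmeticFunction.vonMangoldt_apply_prime Nat.prime_two]
      · push_cast
        exact div_self hlog2
    have hsum_eq : ∑ n ∈ Finset.Ioc 2 ⌊x⌋₊, (vonMangoldt n : ℝ) / Real.log n
        = ∑ n ∈ Finset.Ioc 2 ⌊x⌋₊, f n * (vonMangoldt n : ℝ) := by
      refine Finset.sum_congr rfl fun n _ => ?_
      rw [div_eq_inv_mul]
    rw [hsplit, h2term, hsum_eq, habel, hf2, hpsix, hIoc, MeasureTheory.integral_neg, hInt]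
    show 1 + (f x * psi x - 1 - -(∫ t in Set.Ioc (2:ℝ) x, psi t / (t * Real.log t ^ 2)))
        = psi x / Real.log x + ∫ t in Set.Ioc (2:ℝ) x, psi t / (t * Real.log t ^ 2)
    rw [hf, div_eq_inv_mul]
    ring
end

section
/- If B > 0 is a constant such that ψ(t) ≤ B·t for all t ≥ 1, then there is a constant B' > 0 such that for every real x ≥ 2, π(x) ≤ ψ(x)/log x + B' · x/(log x)². -/
noncomputable def thetaFn (n : ℕ) : ℝ := ∑ m ∈ Finset.Icc 1 n, if m.Prime then Real.log m else 0

lemma thetaFn_nonneg (n : ℕ) : 0 ≤ thetaFn n := by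
  apply Finset.sum_nonneg
  intro m hm
  split_ifs with h
  · exact Real.log_nonneg (by exact_mod_cast h.one_lt.le)
  · exact le_rfl

lemma thetaFn_le_psi (n : ℕ) : thetaFn n ≤ psi n := by
  rw [psi, Nat.floor_natCast]
  apply Finset.sum_le_sum
  intro m hm
  split_ifs with h
  · rw [ArithmeticFunction.vonMangoldt_apply_prime h]
  · exact ArithmeticFunction.vonMangoldt_nonneg

lemma pi_identity : ∀ N : ℕ, 2 ≤ N →
    (((Finset.Icc 1 N).filter Nat.Prime).card : ℝ) =
      thetaFn N / Real.log N +
        ∑ n ∈ Finset.Ico 2 N, thetaFn n * (1 / Real.log n - 1 / Real.log (n + 1)) := by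
  intro N hN
  induction N, hN using Nat.le_induction with
  | base =>
      have h1 : (Finset.Icc 1 2).filter Nat.Prime = {2} := by decide
      have h2 : thetaFn 2 = Real.log 2 := by
        show (∑ m ∈ Finset.Icc (1:ℕ) 2, if m.Prime then Real.log m else 0) = Real.log 2
        rw [show Finset.Icc 1 2 = {1, 2} by decide]
        norm_num
      rw [h1, h2]
      have : Real.log 2 ≠ 0 := ne_of_gt (Real.log_pos one_lt_two)
      simp [div_self this]
  | succ N hN ih =>
      have hlogN : Real.log N ≠ 0 := by
        have : (1:ℝ) < N := by exact_mod_cast hN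
        exact ne_of_gt (Real.log_pos this)
      have hlogN1 : Real.log (N + 1) ≠ 0 := by
        have h2 : (2:ℝ) ≤ (N:ℝ) := by exact_mod_cast hN
        have : (1:ℝ) < (N:ℝ) + 1 := by linarith
        exact ne_of_gt (Real.log_pos this)
      have hcard : (((Finset.Icc 1 (N+1)).filter Nat.Prime).card : ℝ) =
          (((Finset.Icc 1 N).filter Nat.Prime).card : ℝ) +
            (if (N+1).Prime then (1:ℝ) else 0) := by
        rw [Finset.card_filter, Finset.card_filter,
          Finset.sum_Icc_succ_top (by omega : 1 ≤ N + 1)]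
        push_cast
        split_ifs <;> simp
      have htheta : thetaFn (N+1) = thetaFn N + (if (N+1).Prime then Real.log (N+1) else 0) := by
        show (∑ m ∈ Finset.Icc 1 (N+1), if m.Prime then Real.log m else 0) = _
        rw [Finset.sum_Icc_succ_top (by omega : 1 ≤ N + 1)]
        push_cast
        rfl
      have hsum : (∑ n ∈ Finset.Ico 2 (N+1), thetaFn n * (1 / Real.log n - 1 / Real.log (n + 1)))
          = (∑ n ∈ Finset.Ico 2 N, thetaFn n * (1 / Real.log n - 1 / Real.log (n + 1)))
            + thetaFn N * (1 / Real.log N - 1 / Real.log (N + 1)) := by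
        rw [Finset.sum_Ico_succ_top hN]
      rw [hcard, htheta, hsum, ih]
      push_cast
      split_ifs with h
      · field_simp
        ring
      · field_simp
        ring
lemma sum_inv_logsq (x : ℝ) (hx : 2 ≤ x) :
    ∑ n ∈ Finset.Ico 2 ⌊x⌋₊, 1 / (Real.log n) ^ 2
      ≤ (16 / (Real.log 2) ^ 2 + 4) * (x / (Real.log x) ^ 2) := by
  have hl2 : 0 < Real.log 2 := Real.log_pos one_lt_two
  have hx0 : (0:ℝ) < x := by linarith
  have hlx : 0 < Real.log x := Real.log_pos (by linarith)
  have hsx0 : (0:ℝ) ≤ Real.sqrt x := Real.sqrt_nonneg x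
  have hsq : (Real.log x) ^ 2 ≤ 16 * Real.sqrt x := by
    set s := Real.sqrt (Real.sqrt x) with hs
    have hs0 : 0 < s := Real.sqrt_pos.mpr (Real.sqrt_pos.mpr hx0)
    have h1 : Real.log x = 4 * Real.log s := by
      rw [hs, Real.log_sqrt hsx0, Real.log_sqrt hx0.le]; ring
    have h2 : Real.log s ≤ s := by linarith [Real.log_le_sub_one_of_pos hs0]
    have h3 : s ^ 2 = Real.sqrt x := Real.sq_sqrt hsx0
    nlinarith [Real.log_nonneg (show (1:ℝ) ≤ x by linarith)]
  have hpt : ∀ n ∈ Finset.Ico 2 ⌊x⌋₊, (1:ℝ) / (Real.log n) ^ 2 ≤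
      (if (n:ℝ) ≤ Real.sqrt x then 1 / (Real.log 2) ^ 2 else 4 / (Real.log x) ^ 2) := by
    intro n hn
    obtain ⟨hn2, hnN⟩ := Finset.mem_Ico.mp hn
    have hnR : (2:ℝ) ≤ (n:ℝ) := by exact_mod_cast hn2
    have hln : Real.log 2 ≤ Real.log n := Real.log_le_log (by norm_num) hnR
    have hln0 : 0 < Real.log n := lt_of_lt_of_le hl2 hln
    split_ifs with h
    · rw [div_le_div_iff₀ (by positivity) (by positivity)]
      nlinarith
    · push_neg at h
      have h1 : Real.log x = 2 * Real.log (Real.sqrt x) := by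
        rw [Real.log_sqrt hx0.le]; ring
      have h2 : Real.log (Real.sqrt x) ≤ Real.log n :=
        Real.log_le_log (Real.sqrt_pos.mpr hx0) h.le
      rw [div_le_div_iff₀ (by positivity) (by positivity)]
      nlinarith
  have hc1 : (((Finset.Ico 2 ⌊x⌋₊).filter (fun n : ℕ => (n:ℝ) ≤ Real.sqrt x)).card : ℝ)
      ≤ Real.sqrt x := by
    have hsub : (Finset.Ico 2 ⌊x⌋₊).filter (fun n : ℕ => (n:ℝ) ≤ Real.sqrt x)
        ⊆ Finset.Icc 2 ⌊Real.sqrt x⌋₊ := by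
      intro n hn
      rw [Finset.mem_filter, Finset.mem_Ico] at hn
      rw [Finset.mem_Icc]
      exact ⟨hn.1.1, Nat.le_floor hn.2⟩
    have h1 : (((Finset.Ico 2 ⌊x⌋₊).filter (fun n : ℕ => (n:ℝ) ≤ Real.sqrt x)).card) ≤ ⌊Real.sqrt x⌋₊ := by
      calc _ ≤ (Finset.Icc 2 ⌊Real.sqrt x⌋₊).card := Finset.card_le_card hsub
        _ = ⌊Real.sqrt x⌋₊ + 1 - 2 := Nat.card_Icc _ _
        _ ≤ ⌊Real.sqrt x⌋₊ := by omega
    calc (((Finset.Ico 2 ⌊x⌋₊).filter (fun n : ℕ => (n:ℝ) ≤ Real.sqrt x)).card : ℝ)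
        ≤ (⌊Real.sqrt x⌋₊ : ℝ) := by exact_mod_cast h1
      _ ≤ Real.sqrt x := Nat.floor_le hsx0
  have hc2 : (((Finset.Ico 2 ⌊x⌋₊).filter (fun n : ℕ => ¬ (n:ℝ) ≤ Real.sqrt x)).card : ℝ) ≤ x := by
    calc (((Finset.Ico 2 ⌊x⌋₊).filter (fun n : ℕ => ¬ (n:ℝ) ≤ Real.sqrt x)).card : ℝ)
        ≤ ((Finset.Ico 2 ⌊x⌋₊).card : ℝ) := by
          exact_mod_cast Finset.card_filter_le _ _
      _ ≤ (⌊x⌋₊ : ℝ) := by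
          rw [Nat.card_Ico]
          have : ⌊x⌋₊ - 2 ≤ ⌊x⌋₊ := by omega
          exact_mod_cast this
      _ ≤ x := Nat.floor_le hx0.le
  calc ∑ n ∈ Finset.Ico 2 ⌊x⌋₊, 1 / (Real.log n) ^ 2
      ≤ ∑ n ∈ Finset.Ico 2 ⌊x⌋₊,
          (if (n:ℝ) ≤ Real.sqrt x then 1 / (Real.log 2) ^ 2 else 4 / (Real.log x) ^ 2) :=
        Finset.sum_le_sum hpt
    _ = (((Finset.Ico 2 ⌊x⌋₊).filter (fun n : ℕ => (n:ℝ) ≤ Real.sqrt x)).card : ℝ) * (1 / (Real.log 2) ^ 2)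
        + (((Finset.Ico 2 ⌊x⌋₊).filter (fun n : ℕ => ¬ (n:ℝ) ≤ Real.sqrt x)).card : ℝ) * (4 / (Real.log x) ^ 2) := by
        rw [Finset.sum_ite, Finset.sum_const, Finset.sum_const, nsmul_eq_mul, nsmul_eq_mul]
    _ ≤ Real.sqrt x * (1 / (Real.log 2) ^ 2) + x * (4 / (Real.log x) ^ 2) := by
        gcongr <;> positivity
    _ ≤ (16 / (Real.log 2) ^ 2 + 4) * (x / (Real.log x) ^ 2) := by
        have hsx : Real.sqrt x * (Real.log x) ^ 2 ≤ 16 * x := by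
          nlinarith [Real.sq_sqrt hx0.le, Real.sqrt_nonneg x]
        have key : Real.sqrt x ≤ 16 * x / (Real.log x) ^ 2 := by
          rw [le_div_iff₀ (by positivity)]
          linarith
        have e1 : Real.sqrt x * (1 / (Real.log 2) ^ 2)
            ≤ (16 / (Real.log 2) ^ 2) * (x / (Real.log x) ^ 2) := by
          calc Real.sqrt x * (1 / (Real.log 2) ^ 2)
              ≤ (16 * x / (Real.log x) ^ 2) * (1 / (Real.log 2) ^ 2) := by
                exact mul_le_mul_of_nonneg_right key (by positivity)
            _ = (16 / (Real.log 2) ^ 2) * (x / (Real.log x) ^ 2) := by ring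
        have e2 : x * (4 / (Real.log x) ^ 2) = 4 * (x / (Real.log x) ^ 2) := by ring
        rw [e2]
        have : (16 / (Real.log 2) ^ 2 + 4) * (x / (Real.log x) ^ 2)
            = (16 / (Real.log 2) ^ 2) * (x / (Real.log x) ^ 2) + 4 * (x / (Real.log x) ^ 2) := by ring
        rw [this]
        linarith
-- pointwise term bound
lemma term_bound (B : ℝ) (hB : 0 < B) (n : ℕ) (hn : 2 ≤ n) (hθ : thetaFn n ≤ B * n) :
    thetaFn n * (1 / Real.log n - 1 / Real.log (n + 1)) ≤ B / (Real.log n) ^ 2 := by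
  have hnR : (2:ℝ) ≤ (n:ℝ) := by exact_mod_cast hn
  have hn0 : (0:ℝ) < n := by linarith
  have hln : 0 < Real.log n := Real.log_pos (by linarith)
  have hln1 : Real.log n ≤ Real.log (n + 1) := by
    apply Real.log_le_log (by linarith) (by linarith)
  have hln1' : 0 < Real.log (n + 1) := lt_of_lt_of_le hln hln1
  have hdiff : Real.log (n + 1) - Real.log n ≤ 1 / n := by
    have h1 : Real.log (n + 1) - Real.log n = Real.log ((n + 1) / n) := by
      rw [Real.log_div (by linarith) (ne_of_gt hn0)]
    rw [h1]
    have h2 : Real.log ((n + 1) / n) ≤ (n + 1) / n - 1 :=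
      Real.log_le_sub_one_of_pos (by positivity)
    have h3 : ((n:ℝ) + 1) / n - 1 = 1 / n := by field_simp; ring
    linarith
  have hd : 1 / Real.log n - 1 / Real.log (n + 1)
      = (Real.log (n + 1) - Real.log n) / (Real.log n * Real.log (n + 1)) := by
    field_simp
  have hd0 : 0 ≤ 1 / Real.log n - 1 / Real.log (n + 1) := by
    rw [hd]
    exact div_nonneg (by linarith) (mul_nonneg hln.le hln1'.le)
  calc thetaFn n * (1 / Real.log n - 1 / Real.log (n + 1))
      ≤ (B * n) * (1 / Real.log n - 1 / Real.log (n + 1)) := by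
        apply mul_le_mul_of_nonneg_right hθ hd0
    _ ≤ (B * n) * ((1 / n) / (Real.log n * Real.log n)) := by
        apply mul_le_mul_of_nonneg_left _ (by positivity)
        rw [hd]
        apply div_le_div₀ (by positivity) hdiff (mul_pos hln hln)
        exact mul_le_mul_of_nonneg_left hln1 hln.le
    _ = B / (Real.log n) ^ 2 := by
        field_simp

theorem stmt_14 (B : ℝ) (hB : 0 < B) (hpsi : ∀ t : ℝ, 1 ≤ t → psi t ≤ B * t) :
    ∃ B' : ℝ, 0 < B' ∧ ∀ x : ℝ, 2 ≤ x →
      (primePi x : ℝ) ≤ psi x / Real.log x + B' * x / (Real.log x) ^ 2 := by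
  have hl2 : 0 < Real.log 2 := Real.log_pos one_lt_two
  refine ⟨2 * B / Real.log 2 + B * (16 / (Real.log 2) ^ 2 + 4), by positivity, ?_⟩
  intro x hx
  have hx0 : (0:ℝ) < x := by linarith
  have hlx : 0 < Real.log x := Real.log_pos (by linarith)
  have hN2 : 2 ≤ ⌊x⌋₊ := Nat.le_floor (by exact_mod_cast hx)
  set N := ⌊x⌋₊ with hNdef
  have hN2R : (2:ℝ) ≤ (N:ℝ) := by exact_mod_cast hN2
  have hNx : (N:ℝ) ≤ x := Nat.floor_le hx0.le
  have hxN : x < (N:ℝ) + 1 := Nat.lt_floor_add_one x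
  have hlN : 0 < Real.log N := Real.log_pos (by linarith)
  have hl2N : Real.log 2 ≤ Real.log N := Real.log_le_log (by norm_num) hN2R
  have hpsixN : psi (N:ℝ) = psi x := by rw [psi, psi, Nat.floor_natCast]
  have hθpsi : thetaFn N ≤ psi x := hpsixN ▸ thetaFn_le_psi N
  have hθB : ∀ n : ℕ, 1 ≤ n → thetaFn n ≤ B * n := by
    intro n hn
    exact (thetaFn_le_psi n).trans (hpsi n (by exact_mod_cast hn))
  have hθBx : thetaFn N ≤ B * x := by
    calc thetaFn N ≤ B * N := hθB N (by omega)
      _ ≤ B * x := by nlinarith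
  have hθ0 : 0 ≤ thetaFn N := thetaFn_nonneg N
  have hπ : (primePi x : ℝ) = thetaFn N / Real.log N +
      ∑ n ∈ Finset.Ico 2 N, thetaFn n * (1 / Real.log n - 1 / Real.log (n + 1)) :=
    pi_identity N hN2
  -- bound A : theta N / log N
  have hdiffx : Real.log x - Real.log N ≤ 2 / x := by
    have h1 : Real.log x - Real.log N = Real.log (x / N) := by
      rw [Real.log_div (ne_of_gt hx0) (by positivity)]
    have h2 : Real.log (x / N) ≤ x / N - 1 :=
      Real.log_le_sub_one_of_pos (by positivity)
    have h3 : x / N - 1 ≤ 2 / x := by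
      rw [div_sub_one (by positivity), div_le_div_iff₀ (by linarith) hx0]
      nlinarith
    linarith
  have hA : thetaFn N / Real.log N
      ≤ psi x / Real.log x + 2 * B / (Real.log 2 * Real.log x) := by
    have e : thetaFn N / Real.log N - thetaFn N / Real.log x
        = thetaFn N * (Real.log x - Real.log N) / (Real.log N * Real.log x) := by
      field_simp
    have hnum : thetaFn N * (Real.log x - Real.log N) ≤ 2 * B := by
      calc thetaFn N * (Real.log x - Real.log N) ≤ (B * x) * (2 / x) := by
            apply mul_le_mul hθBx hdiffx (by linarith [Real.log_le_log (by linarith : (0:ℝ) < N) hNx]) (by positivity)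
        _ = 2 * B := by field_simp
    have hnum0 : 0 ≤ thetaFn N * (Real.log x - Real.log N) := by
      apply mul_nonneg hθ0
      linarith [Real.log_le_log (by linarith : (0:ℝ) < N) hNx]
    have h5 : thetaFn N * (Real.log x - Real.log N) / (Real.log N * Real.log x)
        ≤ (2 * B) / (Real.log 2 * Real.log x) := by
      apply div_le_div₀ (by positivity) hnum (by positivity)
      exact mul_le_mul_of_nonneg_right hl2N hlx.le
    have h6 : thetaFn N / Real.log x ≤ psi x / Real.log x := by gcongr
    linarith
  -- bound on the sum
  have hS : ∑ n ∈ Finset.Ico 2 N, thetaFn n * (1 / Real.log n - 1 / Real.log (n + 1))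
      ≤ B * ∑ n ∈ Finset.Ico 2 N, 1 / (Real.log n) ^ 2 := by
    rw [Finset.mul_sum]
    apply Finset.sum_le_sum
    intro n hn
    obtain ⟨hn2, _⟩ := Finset.mem_Ico.mp hn
    have h := term_bound B hB n hn2 (hθB n (by omega))
    calc thetaFn n * (1 / Real.log n - 1 / Real.log (n + 1)) ≤ B / (Real.log n) ^ 2 := h
      _ = B * (1 / (Real.log n) ^ 2) := by ring
  have hsum := sum_inv_logsq x hx
  have hSfin : ∑ n ∈ Finset.Ico 2 N, thetaFn n * (1 / Real.log n - 1 / Real.log (n + 1))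
      ≤ B * ((16 / (Real.log 2) ^ 2 + 4) * (x / (Real.log x) ^ 2)) :=
    hS.trans (mul_le_mul_of_nonneg_left hsum hB.le)
  -- small term
  have hlogx_le : Real.log x ≤ x := by linarith [Real.log_le_sub_one_of_pos hx0]
  have hsmall : 2 * B / (Real.log 2 * Real.log x)
      ≤ (2 * B / Real.log 2) * (x / (Real.log x) ^ 2) := by
    have h1 : (1:ℝ) / Real.log x ≤ x / (Real.log x) ^ 2 := by
      rw [div_le_div_iff₀ hlx (by positivity)]
      nlinarith
    calc 2 * B / (Real.log 2 * Real.log x)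
        = (2 * B / Real.log 2) * (1 / Real.log x) := by ring
      _ ≤ (2 * B / Real.log 2) * (x / (Real.log x) ^ 2) := by
          exact mul_le_mul_of_nonneg_left h1 (by positivity)
  have hfinal : (2 * B / Real.log 2 + B * (16 / (Real.log 2) ^ 2 + 4)) * x / (Real.log x) ^ 2
      = (2 * B / Real.log 2) * (x / (Real.log x) ^ 2)
        + B * ((16 / (Real.log 2) ^ 2 + 4) * (x / (Real.log x) ^ 2)) := by
    ring
  rw [hπ, hfinal]
  linarith
end

section
/- For every real s > 0, s · ∫_1^∞ u^{−s−1} · (∫_1^u (Σ_{i ≤ t} μ(i)/i) dt/t) du = 1/(s · ζ(s+1)), where the inner sum is over positive integers i ≤ t and ζ denotes the Riemann zeta function. -/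
open MeasureTheory Real Set Filter Topology

lemma aux_ind_ae (c : ℝ) (g : ℝ → ℝ) :
    (Set.Ici c).indicator g =ᵐ[volume] (Set.Ioi c).indicator g := by
  have h : ∀ᵐ t : ℝ, t ≠ c := by
    rw [MeasureTheory.ae_iff]
    have : {a : ℝ | ¬a ≠ c} = {c} := by ext t; simp
    rw [this]
    exact measure_singleton c
  filter_upwards [h] with t ht
  simp only [Set.indicator_apply, Set.mem_Ici, Set.mem_Ioi]
  refine if_congr ⟨fun h' => lt_of_le_of_ne h' (Ne.symm ht), le_of_lt⟩ rfl rfl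

lemma aux_B_int {s : ℝ} (hs : 0 < s) {c : ℝ} (hc : 1 ≤ c) :
    IntegrableOn (fun u : ℝ => u ^ (-s - 1) * (Real.log u - Real.log c)) (Set.Ioi c) := by
  have hc0 : (0:ℝ) < c := lt_of_lt_of_le one_pos hc
  have hmeas : AEStronglyMeasurable (fun u : ℝ => u ^ (-s - 1) * (Real.log u - Real.log c))
      (volume.restrict (Set.Ioi c)) := by
    refine (ContinuousOn.mul ?_ ?_).aestronglyMeasurable measurableSet_Ioi
    · exact fun u hu => (Real.continuousAt_rpow_const u _
        (Or.inl (ne_of_gt (lt_trans hc0 hu)))).continuousWithinAt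
    · exact fun u hu => ((Real.continuousAt_log (ne_of_gt (lt_trans hc0 hu))).sub
        continuousAt_const).continuousWithinAt
  refine Integrable.mono'
    ((integrableOn_Ioi_rpow_of_lt (a := -(s/2) - 1) (by linarith) hc0).const_mul (2 / s))
    hmeas ?_
  filter_upwards [ae_restrict_mem measurableSet_Ioi] with u hu
  have hu1 : (1:ℝ) < u := lt_of_le_of_lt hc hu
  have hu0 : (0:ℝ) < u := lt_trans one_pos hu1
  have hlog : 0 ≤ Real.log u - Real.log c := by
    have := Real.log_le_log hc0 (le_of_lt hu)
    linarith
  rw [Real.norm_eq_abs, abs_of_nonneg (mul_nonneg (Real.rpow_nonneg hu0.le _) hlog)]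
  have h1 : Real.log u - Real.log c ≤ (2 / s) * u ^ (s / 2) := by
    have h2 : Real.log u ≤ u ^ (s / 2) / (s / 2) := Real.log_le_rpow_div hu0.le (by linarith)
    have h3 : 0 ≤ Real.log c := Real.log_nonneg hc
    have h4 : u ^ (s/2) / (s/2) = (2/s) * u ^ (s/2) := by
      field_simp
    linarith [h4 ▸ h2]
  calc u ^ (-s - 1) * (Real.log u - Real.log c)
      ≤ u ^ (-s - 1) * ((2 / s) * u ^ (s / 2)) :=
        mul_le_mul_of_nonneg_left h1 (Real.rpow_nonneg hu0.le _)
    _ = 2 / s * u ^ (-(s / 2) - 1) := by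
        rw [show u ^ (-s - 1) * (2 / s * u ^ (s / 2)) = 2 / s * (u ^ (-s-1) * u ^ (s/2)) by ring,
          ← Real.rpow_add hu0, show -s - 1 + s / 2 = -(s/2) - 1 by ring]

lemma aux_B {s : ℝ} (hs : 0 < s) {c : ℝ} (hc : 1 ≤ c) :
    ∫ u in Set.Ioi c, u ^ (-s - 1) * (Real.log u - Real.log c) = c ^ (-s) / s ^ 2 := by
  have hc0 : (0:ℝ) < c := lt_of_lt_of_le one_pos hc
  have hss : s ≠ 0 := ne_of_gt hs
  set f : ℝ → ℝ := fun u => -(u ^ (-s) * (Real.log u - Real.log c)) / s - u ^ (-s) / s ^ 2 with hf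
  have hderiv : ∀ u ∈ Set.Ici c, HasDerivAt f (u ^ (-s - 1) * (Real.log u - Real.log c)) u := by
    intro u hu
    have hu0 : (0:ℝ) < u := lt_of_lt_of_le hc0 hu
    have hp : HasDerivAt (fun x : ℝ => x ^ (-s)) (-s * u ^ (-s - 1)) u := by
      simpa using Real.hasDerivAt_rpow_const (p := -s) (Or.inl (ne_of_gt hu0))
    have hl : HasDerivAt (fun x : ℝ => Real.log x - Real.log c) u⁻¹ u :=
      (Real.hasDerivAt_log (ne_of_gt hu0)).sub_const _
    have h := (((hp.mul hl).neg.div_const s).sub ((hp.div_const (s ^ 2))))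
    refine h.congr_deriv ?_
    have hinv : u⁻¹ = u ^ (-1 : ℝ) := (Real.rpow_neg_one u).symm
    have hmul : u ^ (-s) * u⁻¹ = u ^ (-s - 1) := by
      rw [hinv, ← Real.rpow_add hu0, show (-s) + (-1:ℝ) = -s - 1 by ring]
    rw [hmul]
    field_simp
    ring
  have htend : Tendsto f atTop (𝓝 0) := by
    have h1 : Tendsto (fun u : ℝ => Real.log u / u ^ s) atTop (𝓝 (0:ℝ)) :=
      (isLittleO_log_rpow_atTop hs).tendsto_div_nhds_zero
    have h2 : Tendsto (fun u : ℝ => u ^ (-s)) atTop (𝓝 (0:ℝ)) := tendsto_rpow_neg_atTop hs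
    have key : Tendsto (fun u : ℝ => (-(Real.log u / u ^ s)
        + (Real.log c) * u ^ (-s)) / s - u ^ (-s) / s ^ 2) atTop (𝓝 (0:ℝ)) := by
      have := ((h1.neg.add (h2.const_mul (Real.log c))).div_const s).sub
        (h2.div_const (s ^ 2))
      simpa using this
    refine key.congr' ?_
    filter_upwards [eventually_gt_atTop (0:ℝ)] with u hu0
    rw [hf]
    have : Real.log u / u ^ s = Real.log u * u ^ (-s) := by
      rw [Real.rpow_neg hu0.le, div_eq_mul_inv]
    rw [this]
    ring
  have := integral_Ioi_of_hasDerivAt_of_tendsto' hderiv (aux_B_int hs hc) htend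
  rw [this, hf]
  simp only [sub_self, mul_zero, zero_div, zero_sub, neg_mul, neg_div]
  ring


-- integrability of the indicator piece over Ioi 1
lemma aux_C_int {s : ℝ} (hs : 0 < s) {c : ℝ} (hc : 1 ≤ c) :
    Integrable ((Set.Ici c).indicator (fun u : ℝ => u ^ (-s - 1) * (Real.log u - Real.log c)))
      (volume.restrict (Set.Ioi 1)) := by
  have h1 : Integrable ((Set.Ioi c).indicator
      (fun u : ℝ => u ^ (-s - 1) * (Real.log u - Real.log c)))
      (volume.restrict (Set.Ioi 1)) := by
    rw [integrable_indicator_iff measurableSet_Ioi]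
    unfold IntegrableOn
    rw [Measure.restrict_restrict measurableSet_Ioi, Set.Ioi_inter_Ioi,
      sup_eq_left.mpr hc]
    exact aux_B_int hs hc
  have hae : (Set.Ici c).indicator (fun u : ℝ => u ^ (-s - 1) * (Real.log u - Real.log c))
      =ᵐ[volume.restrict (Set.Ioi 1)]
      (Set.Ioi c).indicator (fun u : ℝ => u ^ (-s - 1) * (Real.log u - Real.log c)) :=
    ae_restrict_of_ae (aux_ind_ae c _)
  exact h1.congr hae.symm

lemma aux_C {s : ℝ} (hs : 0 < s) {c : ℝ} (hc : 1 ≤ c) :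
    ∫ u in Set.Ioi (1:ℝ),
      (Set.Ici c).indicator (fun u : ℝ => u ^ (-s - 1) * (Real.log u - Real.log c)) u
      = c ^ (-s) / s ^ 2 := by
  rw [integral_congr_ae (ae_restrict_of_ae (aux_ind_ae c _)),
    integral_indicator measurableSet_Ioi,
    Measure.restrict_restrict measurableSet_Ioi, Set.Ioi_inter_Ioi, sup_eq_left.mpr hc]
  exact aux_B hs hc

-- inner integral
lemma aux_inner {u : ℝ} (hu : 1 ≤ u) :
    (∫ t in (1:ℝ)..u, (∑ i ∈ Finset.Icc 1 ⌊t⌋₊,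
        (ArithmeticFunction.moebius i : ℝ) / i) / t)
      = ∑ i ∈ Finset.Icc 1 ⌊u⌋₊,
        ((ArithmeticFunction.moebius i : ℝ) / i) * (Real.log u - Real.log i) := by
  set a : ℕ → ℝ := fun i => (ArithmeticFunction.moebius i : ℝ) / i with ha
  have hu0 : (0:ℝ) < u := lt_of_lt_of_le one_pos hu
  -- step 1 : pointwise rewrite of the integrand
  have hcong : ∀ t ∈ Set.uIcc (1:ℝ) u,
      (∑ i ∈ Finset.Icc 1 ⌊t⌋₊, a i) / t
        = ∑ i ∈ Finset.Icc 1 ⌊u⌋₊, (Set.Ici (i:ℝ)).indicator (fun t => a i / t) t := by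
    intro t ht
    rw [Set.uIcc_of_le hu] at ht
    obtain ⟨ht1, htu⟩ := ht
    have ht0 : (0:ℝ) ≤ t := le_trans zero_le_one ht1
    calc (∑ i ∈ Finset.Icc 1 ⌊t⌋₊, a i) / t
        = ∑ i ∈ Finset.Icc 1 ⌊t⌋₊, a i / t := Finset.sum_div _ _ _
      _ = ∑ i ∈ Finset.Icc 1 ⌊t⌋₊, (Set.Ici (i:ℝ)).indicator (fun t => a i / t) t := by
          refine Finset.sum_congr rfl fun i hi => ?_
          rw [Finset.mem_Icc] at hi
          have : t ∈ Set.Ici (i:ℝ) := (Nat.le_floor_iff ht0).mp hi.2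
          exact (Set.indicator_of_mem this _).symm
      _ = ∑ i ∈ Finset.Icc 1 ⌊u⌋₊, (Set.Ici (i:ℝ)).indicator (fun t => a i / t) t := by
          refine Finset.sum_subset (Finset.Icc_subset_Icc_right (Nat.floor_le_floor htu))
            fun i hiu hit => ?_
          rw [Finset.mem_Icc] at hiu
          rw [Finset.mem_Icc, not_and] at hit
          have : t ∉ Set.Ici (i:ℝ) := fun h => hit hiu.1 ((Nat.le_floor_iff ht0).mpr h)
          exact Set.indicator_of_notMem this _
  -- step 2 : integrate term by term
  have hint : ∀ i ∈ Finset.Icc 1 ⌊u⌋₊,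
      IntervalIntegrable ((Set.Ici (i:ℝ)).indicator (fun t => a i / t)) volume 1 u := by
    intro i hi
    rw [intervalIntegrable_iff]
    refine Integrable.indicator ?_ measurableSet_Ici
    have hco : ContinuousOn (fun t : ℝ => a i / t) (Set.uIcc 1 u) := by
      refine continuousOn_const.div continuousOn_id fun t ht => ?_
      rw [Set.uIcc_of_le hu] at ht
      exact ne_of_gt (lt_of_lt_of_le one_pos ht.1)
    exact intervalIntegrable_iff.mp hco.intervalIntegrable
  rw [intervalIntegral.integral_congr hcong, intervalIntegral.integral_finset_sum hint]
  refine Finset.sum_congr rfl fun i hi => ?_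
  rw [Finset.mem_Icc] at hi
  have hi1 : (1:ℝ) ≤ (i:ℝ) := by exact_mod_cast hi.1
  have hiu : (i:ℝ) ≤ u := le_trans ((Nat.le_floor_iff hu0.le).mp hi.2) le_rfl
  have hi0 : (0:ℝ) < i := lt_of_lt_of_le one_pos hi1
  -- compute ∫ t in 1..u, indicator (Ici i) (a i / t)
  have hae : (Set.Ici (i:ℝ)).indicator (fun t => a i / t)
      =ᵐ[volume.restrict (Set.Ioc 1 u)] (Set.Ioi (i:ℝ)).indicator (fun t => a i / t) :=
    ae_restrict_of_ae (aux_ind_ae _ _)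
  rw [intervalIntegral.integral_of_le hu, integral_congr_ae hae,
    integral_indicator measurableSet_Ioi,
    Measure.restrict_restrict measurableSet_Ioi,
    show Set.Ioi (i:ℝ) ∩ Set.Ioc 1 u = Set.Ioc (i:ℝ) u by
      rw [Set.inter_comm, Set.Ioc_inter_Ioi, sup_eq_right.mpr hi1],
    ← intervalIntegral.integral_of_le hiu]
  have : ∀ t : ℝ, a i / t = a i * (1 / t) := fun t => by ring
  simp_rw [this]
  rw [intervalIntegral.integral_const_mul, _root_.integral_one_div
    (fun h => by
      rw [Set.uIcc_of_le hiu] at h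
      exact absurd h.1 (not_le.mpr hi0)),
    Real.log_div (ne_of_gt hu0) (ne_of_gt hi0)]

theorem stmt_15 (s : ℝ) (hs : 0 < s) :
    (s : ℂ) * ((∫ u in Set.Ioi (1:ℝ), u ^ (-s - 1) *
        ∫ t in (1:ℝ)..u, (∑ i ∈ Finset.Icc 1 ⌊t⌋₊,
          (ArithmeticFunction.moebius i : ℝ) / i) / t : ℝ) : ℂ) =
      1 / ((s : ℂ) * riemannZeta ((s : ℂ) + 1)) := by
  have hs0 : s ≠ 0 := ne_of_gt hs
  set a : ℕ → ℝ := fun i => (ArithmeticFunction.moebius i : ℝ) / i with ha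
  set F : ℕ → ℝ → ℝ := fun n u =>
    a n * (Set.Ici (n:ℝ)).indicator (fun u => u ^ (-s - 1) * (Real.log u - Real.log n)) u
    with hFdef
  have ha0 : a 0 = 0 := by simp [ha]
  have hF0 : F 0 = fun _ => 0 := by funext u; simp [hFdef, ha0]
  -- pointwise identity on Ioi 1
  have hpt : ∀ u ∈ Set.Ioi (1:ℝ),
      u ^ (-s - 1) * (∫ t in (1:ℝ)..u, (∑ i ∈ Finset.Icc 1 ⌊t⌋₊,
        (ArithmeticFunction.moebius i : ℝ) / i) / t) = ∑' n, F n u := by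
    intro u hu
    have hu1 : (1:ℝ) ≤ u := le_of_lt hu
    have hu0 : (0:ℝ) ≤ u := le_trans zero_le_one hu1
    have hvanish : ∀ n ∉ Finset.Icc 1 ⌊u⌋₊, F n u = 0 := by
      intro n hn
      rw [Finset.mem_Icc, not_and] at hn
      rcases Nat.eq_zero_or_pos n with h0 | h1
      · rw [h0, hF0]
      · have : u ∉ Set.Ici (n:ℝ) := by
          intro hmem
          exact hn h1 ((Nat.le_floor_iff hu0).mpr hmem)
        simp [hFdef, Set.indicator_of_notMem this]
    rw [aux_inner hu1, Finset.mul_sum, tsum_eq_sum hvanish]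
    refine Finset.sum_congr rfl fun i hi => ?_
    rw [Finset.mem_Icc] at hi
    have : u ∈ Set.Ici (i:ℝ) := le_trans ((Nat.le_floor_iff hu0).mp hi.2) le_rfl
    rw [hFdef]
    simp only [Set.indicator_of_mem this]
    ring
  -- integrability of each term
  have hInt : ∀ n : ℕ, Integrable (F n) (volume.restrict (Set.Ioi 1)) := by
    intro n
    rcases Nat.eq_zero_or_pos n with h0 | h1
    · rw [h0, hF0]; exact integrable_zero _ _ _
    · have hc : (1:ℝ) ≤ (n:ℝ) := by exact_mod_cast h1
      exact (aux_C_int hs hc).const_mul (a n)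
  -- the norm integrals
  have hnormval : ∀ n : ℕ, (∫ u in Set.Ioi (1:ℝ), ‖F n u‖) = |a n| * ((n:ℝ) ^ (-s) / s ^ 2) := by
    intro n
    rcases Nat.eq_zero_or_pos n with h0 | h1
    · rw [h0, hF0, ha0]
      simp
    · have hc : (1:ℝ) ≤ (n:ℝ) := by exact_mod_cast h1
      have hnorm : ∀ u : ℝ, ‖F n u‖ = |a n| *
          (Set.Ici (n:ℝ)).indicator (fun u => u ^ (-s - 1) * (Real.log u - Real.log n)) u := by
        intro u
        rw [hFdef, Real.norm_eq_abs, abs_mul]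
        congr 1
        by_cases hm : u ∈ Set.Ici (n:ℝ)
        · rw [Set.indicator_of_mem hm]
          have hu0 : (0:ℝ) < u := lt_of_lt_of_le (lt_of_lt_of_le one_pos hc) hm
          have hlog : 0 ≤ Real.log u - Real.log ↑n := by
            have := Real.log_le_log (lt_of_lt_of_le one_pos hc) hm
            linarith
          exact abs_of_nonneg (mul_nonneg (Real.rpow_nonneg hu0.le _) hlog)
        · rw [Set.indicator_of_notMem hm]
          exact abs_zero
      simp_rw [hnorm]
      rw [integral_const_mul, aux_C hs hc]
  -- summability of norm integrals
  have habs : ∀ n : ℕ, |a n| ≤ ((n:ℝ))⁻¹ := by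
    intro n
    rcases Nat.eq_zero_or_pos n with h0 | h1
    · simp [h0, ha0]
    · have hn0 : (0:ℝ) < (n:ℝ) := by exact_mod_cast h1
      rw [ha, abs_div, abs_of_nonneg hn0.le, div_le_iff₀ hn0, inv_mul_cancel₀ (ne_of_gt hn0)]
      exact_mod_cast ArithmeticFunction.abs_moebius_le_one
  have hsum : Summable fun n : ℕ => ∫ u in Set.Ioi (1:ℝ), ‖F n u‖ := by
    refine Summable.of_nonneg_of_le
      (fun n => integral_nonneg fun u => norm_nonneg _)
      (fun n => ?_)
      (((Real.summable_nat_rpow).mpr (show -(s+1) < -1 by linarith)).mul_left (1 / s ^ 2))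
    rw [hnormval n]
    rcases Nat.eq_zero_or_pos n with h0 | h1
    · simp only [h0, ha0, abs_zero, zero_mul, Nat.cast_zero]
      exact mul_nonneg (by positivity) (Real.rpow_nonneg le_rfl _)
    · have hn0 : (0:ℝ) < (n:ℝ) := by exact_mod_cast h1
      have hstep : (n:ℝ)⁻¹ * ((n:ℝ) ^ (-s)) = (n:ℝ) ^ (-(s+1)) := by
        rw [← Real.rpow_neg_one (n:ℝ), ← Real.rpow_add hn0]
        norm_num
      calc |a n| * ((n:ℝ) ^ (-s) / s ^ 2)
          ≤ (n:ℝ)⁻¹ * ((n:ℝ) ^ (-s) / s ^ 2) := by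
            refine mul_le_mul_of_nonneg_right (habs n) ?_
            positivity
        _ = 1 / s ^ 2 * (n:ℝ) ^ (-(s+1)) := by
            rw [show (n:ℝ)⁻¹ * ((n:ℝ) ^ (-s) / s ^ 2) = ((n:ℝ)⁻¹ * (n:ℝ) ^ (-s)) / s ^ 2 by ring,
              hstep]
            ring
  -- value of the outer integral
  have houter : (∫ u in Set.Ioi (1:ℝ), u ^ (-s - 1) *
      ∫ t in (1:ℝ)..u, (∑ i ∈ Finset.Icc 1 ⌊t⌋₊,
        (ArithmeticFunction.moebius i : ℝ) / i) / t)
      = (∑' n : ℕ, a n * (n:ℝ) ^ (-s)) / s ^ 2 := by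
    rw [setIntegral_congr_fun measurableSet_Ioi hpt,
      ← integral_tsum_of_summable_integral_norm hInt hsum]
    have hterm : ∀ n : ℕ, (∫ u in Set.Ioi (1:ℝ), F n u) = a n * (n:ℝ) ^ (-s) / s ^ 2 := by
      intro n
      rcases Nat.eq_zero_or_pos n with h0 | h1
      · rw [h0, hF0, ha0]; simp
      · have hc : (1:ℝ) ≤ (n:ℝ) := by exact_mod_cast h1
        rw [hFdef]
        rw [integral_const_mul, aux_C hs hc]
        ring
    rw [tsum_congr hterm, ← tsum_div_const]
  rw [houter]
  -- now the complex identification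
  have hz1 : 1 < ((s:ℂ) + 1).re := by
    simp only [Complex.add_re, Complex.ofReal_re, Complex.one_re]
    linarith
  have hzeta : riemannZeta ((s:ℂ) + 1) ≠ 0 := riemannZeta_ne_zero_of_one_lt_re hz1
  have hL : riemannZeta ((s:ℂ) + 1)
      * LSeries (fun n => ((ArithmeticFunction.moebius n : ℤ) : ℂ)) ((s:ℂ) + 1) = 1 := by
    have := ArithmeticFunction.LSeries_zeta_mul_Lseries_moebius hz1
    rwa [ArithmeticFunction.LSeries_zeta_eq_riemannZeta hz1] at this
  have hcast : ((∑' n : ℕ, a n * (n:ℝ) ^ (-s) : ℝ) : ℂ)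
      = LSeries (fun n => ((ArithmeticFunction.moebius n : ℤ) : ℂ)) ((s:ℂ) + 1) := by
    rw [Complex.ofReal_tsum, LSeries]
    refine tsum_congr fun n => ?_
    rcases Nat.eq_zero_or_pos n with h0 | h1
    · rw [h0, ha0, LSeries.term_zero]
      simp
    · have hn0 : (0:ℝ) < (n:ℝ) := by exact_mod_cast h1
      rw [LSeries.term_of_ne_zero (Nat.pos_iff_ne_zero.mp h1)]
      have hreal : a n * (n:ℝ) ^ (-s)
          = (ArithmeticFunction.moebius n : ℝ) * ((n:ℝ) ^ (s+1))⁻¹ := by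
        rw [ha, ← Real.rpow_neg hn0.le,
          show -(s+1) = (-1) + (-s) by ring, Real.rpow_add hn0, Real.rpow_neg_one]
        ring
      rw [hreal]
      push_cast
      rw [Complex.ofReal_cpow hn0.le]
      push_cast
      rw [div_eq_mul_inv]
  rw [show (((∑' n : ℕ, a n * (n:ℝ) ^ (-s)) / s ^ 2 : ℝ) : ℂ)
      = ((∑' n : ℕ, a n * (n:ℝ) ^ (-s) : ℝ) : ℂ) / ((s:ℂ)) ^ 2 by push_cast; ring,
    hcast]
  have hsC : (s : ℂ) ≠ 0 := Complex.ofReal_ne_zero.mpr hs0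
  field_simp
  linear_combination hL
end

section
/- The function x ↦ Σ_{n ≤ x} (μ(n)/n) · log(x/n) is bounded on [1, ∞); equivalently, x ↦ ∫_1^x (Σ_{i ≤ t} μ(i)/i) dt/t is bounded on [1, ∞). -/
open Finset ArithmeticFunction Real MeasureTheory intervalIntegral

lemma swap_sum (N : ℕ) (f : ℕ → ℕ → ℝ) :
    ∑ n ∈ Finset.Icc 1 N, ∑ k ∈ Finset.Icc 1 (N / n), f n k
      = ∑ m ∈ Finset.Icc 1 N, ∑ p ∈ m.divisorsAntidiagonal, f p.1 p.2 := by
  rw [Finset.sum_sigma', Finset.sum_sigma']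
  refine Finset.sum_nbij' (fun x => ⟨x.1 * x.2, (x.1, x.2)⟩) (fun y => ⟨y.2.1, y.2.2⟩)
    ?_ ?_ ?_ ?_ ?_
  · rintro ⟨n, k⟩ h
    simp only [Finset.mem_sigma, Finset.mem_Icc] at h
    obtain ⟨⟨h1, h2⟩, h3, h4⟩ := h
    have hkn : k * n ≤ N := (Nat.le_div_iff_mul_le (by omega)).mp h4
    have hnk : n * k ≤ N := by rwa [mul_comm]
    exact Finset.mem_sigma.mpr ⟨Finset.mem_Icc.mpr ⟨Nat.one_le_iff_ne_zero.mpr (by positivity), hnk⟩,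
      Nat.mem_divisorsAntidiagonal.mpr ⟨rfl, by positivity⟩⟩
  · rintro ⟨m, d, e⟩ h
    simp only [Finset.mem_sigma, Finset.mem_Icc, Nat.mem_divisorsAntidiagonal] at h ⊢
    obtain ⟨⟨h1, h2⟩, h3, h4⟩ := h
    have hd : 1 ≤ d := by
      rcases Nat.eq_zero_or_pos d with rfl | h; · simp at h3; omega
      · exact h
    have he : 1 ≤ e := by
      rcases Nat.eq_zero_or_pos e with rfl | h; · simp at h3; omega
      · exact h
    refine ⟨⟨hd, ?_⟩, he, ?_⟩
    · calc d ≤ d * e := Nat.le_mul_of_pos_right d he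
        _ = m := h3
        _ ≤ N := h2
    · rw [Nat.le_div_iff_mul_le (by omega), mul_comm]
      omega
  · rintro ⟨n, k⟩ h; rfl
  · rintro ⟨m, d, e⟩ h
    simp only [Finset.mem_sigma, Nat.mem_divisorsAntidiagonal] at h
    obtain ⟨_, h3, _⟩ := h
    simp [h3]
  · rintro ⟨n, k⟩ h; rfl

lemma musum (m : ℕ) :
    ∑ p ∈ m.divisorsAntidiagonal, ((ArithmeticFunction.moebius p.1 : ℤ) : ℝ)
      = if m = 1 then 1 else 0 := by
  rcases Nat.eq_zero_or_pos m with rfl | hm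
  · simp
  have h := congrArg (fun F : ArithmeticFunction ℤ => F m) ArithmeticFunction.moebius_mul_coe_zeta
  simp only [ArithmeticFunction.mul_apply, ArithmeticFunction.one_apply] at h
  have h2 : ∑ p ∈ m.divisorsAntidiagonal, (ArithmeticFunction.moebius p.1 : ℤ)
      = if m = 1 then 1 else 0 := by
    rw [← h]
    refine Finset.sum_congr rfl fun p hp => ?_
    have : p.2 ≠ 0 := Nat.right_ne_zero_of_mem_divisorsAntidiagonal hp
    simp [ArithmeticFunction.natCoe_apply, ArithmeticFunction.zeta_apply, this]
  calc ∑ p ∈ m.divisorsAntidiagonal, ((ArithmeticFunction.moebius p.1 : ℤ) : ℝ)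
      = ((∑ p ∈ m.divisorsAntidiagonal, (ArithmeticFunction.moebius p.1 : ℤ) : ℤ) : ℝ) := by
        push_cast; ring_nf
    _ = _ := by rw [h2]; split <;> simp

lemma key2 (N : ℕ) (hN : 1 ≤ N) :
    ∑ n ∈ Finset.Icc 1 N, ((ArithmeticFunction.moebius n : ℤ) : ℝ) * (↑(N / n)) = 1 := by
  have h := swap_sum N (fun n _ => ((ArithmeticFunction.moebius n : ℤ) : ℝ))
  simp only [Finset.sum_const, Nat.card_Icc, Nat.add_sub_cancel, nsmul_eq_mul] at h
  calc ∑ n ∈ Finset.Icc 1 N, ((ArithmeticFunction.moebius n : ℤ) : ℝ) * (↑(N / n))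
      = ∑ n ∈ Finset.Icc 1 N, (↑(N / n) : ℝ) * ((ArithmeticFunction.moebius n : ℤ) : ℝ) := by
        exact Finset.sum_congr rfl fun n _ => mul_comm _ _
    _ = ∑ m ∈ Finset.Icc 1 N, ∑ p ∈ m.divisorsAntidiagonal,
          ((ArithmeticFunction.moebius p.1 : ℤ) : ℝ) := h
    _ = ∑ m ∈ Finset.Icc 1 N, (if m = 1 then (1:ℝ) else 0) :=
        Finset.sum_congr rfl fun m _ => musum m
    _ = 1 := by rw [Finset.sum_ite_eq' (Finset.Icc 1 N) 1 (fun _ => (1:ℝ))]; simp [hN]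

lemma Mbound (N : ℕ) (hN : 1 ≤ N) :
    |∑ n ∈ Finset.Icc 1 N, ((ArithmeticFunction.moebius n : ℤ) : ℝ) / n| ≤ 1 := by
  set M := ∑ n ∈ Finset.Icc 1 N, ((ArithmeticFunction.moebius n : ℤ) : ℝ) / n with hM
  have hN0 : (0:ℝ) < N := by exact_mod_cast hN
  have hNM : (N:ℝ) * M - 1 = ∑ n ∈ Finset.Icc 1 N,
      ((ArithmeticFunction.moebius n : ℤ) : ℝ) * ((N:ℝ)/n - (↑(N/n))) := by
    rw [hM, Finset.mul_sum, ← key2 N hN, ← Finset.sum_sub_distrib]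
    refine Finset.sum_congr rfl fun n hn => ?_
    have hn1 : 1 ≤ n := (Finset.mem_Icc.mp hn).1
    have hn0 : (n:ℝ) ≠ 0 := by positivity
    field_simp
  have hterm : ∀ n ∈ Finset.Icc 1 N,
      |((ArithmeticFunction.moebius n : ℤ) : ℝ) * ((N:ℝ)/n - (↑(N/n)))|
        ≤ if n = 1 then 0 else 1 := by
    intro n hn
    have hn1 : 1 ≤ n := (Finset.mem_Icc.mp hn).1
    have hn0 : (0:ℝ) < n := by exact_mod_cast hn1
    have hmod : (N:ℝ) = n * (↑(N/n)) + (↑(N % n)) := by exact_mod_cast (Nat.div_add_mod N n).symm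
    have hd : (N:ℝ)/n - (↑(N/n)) = (↑(N % n)) / n := by
      rw [hmod]; field_simp; ring
    have hmu : |((ArithmeticFunction.moebius n : ℤ) : ℝ)| ≤ 1 := by
      have := ArithmeticFunction.abs_moebius_le_one (n := n)
      exact_mod_cast (by exact_mod_cast this : |((ArithmeticFunction.moebius n : ℤ) : ℝ)| ≤ ((1:ℤ):ℝ))
    rcases eq_or_ne n 1 with rfl | hne
    · simp [Nat.mod_one]
    · simp only [hne, if_false]
      rw [abs_mul, hd]
      have h1 : |(↑(N % n) : ℝ) / n| ≤ 1 := by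
        rw [abs_of_nonneg (by positivity)]
        rw [div_le_one hn0]
        exact_mod_cast (Nat.mod_lt N (by omega)).le
      calc |((ArithmeticFunction.moebius n : ℤ) : ℝ)| * |(↑(N % n) : ℝ) / n| ≤ 1 * 1 := by
            exact mul_le_mul hmu h1 (abs_nonneg _) zero_le_one
        _ = 1 := by ring
  have habs : |(N:ℝ) * M - 1| ≤ (N:ℝ) - 1 := by
    rw [hNM]
    calc |∑ n ∈ Finset.Icc 1 N, ((ArithmeticFunction.moebius n : ℤ) : ℝ) * ((N:ℝ)/n - (↑(N/n)))|
        ≤ ∑ n ∈ Finset.Icc 1 N, |((ArithmeticFunction.moebius n : ℤ) : ℝ) * ((N:ℝ)/n - (↑(N/n)))| :=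
          Finset.abs_sum_le_sum_abs _ _
      _ ≤ ∑ n ∈ Finset.Icc 1 N, (if n = 1 then (0:ℝ) else 1) := Finset.sum_le_sum hterm
      _ = ∑ n ∈ Finset.Icc 1 N, ((1:ℝ) - if n = 1 then 1 else 0) := by
          refine Finset.sum_congr rfl fun n _ => ?_; split <;> ring
      _ = (N:ℝ) - 1 := by
          rw [Finset.sum_sub_distrib, Finset.sum_const, Finset.sum_ite_eq' (Finset.Icc 1 N) 1
            (fun _ => (1:ℝ))]
          simp [Nat.card_Icc, hN]
  have : (N:ℝ) * |M| ≤ (N:ℝ) := by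
    have := abs_sub_abs_le_abs_sub ((N:ℝ) * M) 1
    rw [abs_mul, abs_of_nonneg hN0.le, abs_one] at this
    linarith
  calc |M| = ((N:ℝ) * |M|) / N := by field_simp
    _ ≤ (N:ℝ) / N := by gcongr
    _ = 1 := by field_simp

lemma key1 (N : ℕ) (hN : 1 ≤ N) :
    ∑ n ∈ Finset.Icc 1 N, (((ArithmeticFunction.moebius n : ℤ) : ℝ) / n)
      * (∑ k ∈ Finset.Icc 1 (N/n), (k:ℝ)⁻¹) = 1 := by
  have h := swap_sum N (fun n k => ((ArithmeticFunction.moebius n : ℤ) : ℝ) / n * (k:ℝ)⁻¹)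
  calc ∑ n ∈ Finset.Icc 1 N, (((ArithmeticFunction.moebius n : ℤ) : ℝ) / n)
        * (∑ k ∈ Finset.Icc 1 (N/n), (k:ℝ)⁻¹)
      = ∑ n ∈ Finset.Icc 1 N, ∑ k ∈ Finset.Icc 1 (N/n),
          ((ArithmeticFunction.moebius n : ℤ) : ℝ) / n * (k:ℝ)⁻¹ := by
        exact Finset.sum_congr rfl fun n _ => Finset.mul_sum _ _ _
    _ = ∑ m ∈ Finset.Icc 1 N, ∑ p ∈ m.divisorsAntidiagonal,
          ((ArithmeticFunction.moebius p.1 : ℤ) : ℝ) / p.1 * (p.2:ℝ)⁻¹ := h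
    _ = ∑ m ∈ Finset.Icc 1 N, (m:ℝ)⁻¹ * ∑ p ∈ m.divisorsAntidiagonal,
          ((ArithmeticFunction.moebius p.1 : ℤ) : ℝ) := by
        refine Finset.sum_congr rfl fun m hm => ?_
        rw [Finset.mul_sum]
        refine Finset.sum_congr rfl fun p hp => ?_
        obtain ⟨hpm, hm0⟩ := Nat.mem_divisorsAntidiagonal.mp hp
        have h1 : p.1 ≠ 0 := Nat.left_ne_zero_of_mem_divisorsAntidiagonal hp
        have h2 : p.2 ≠ 0 := Nat.right_ne_zero_of_mem_divisorsAntidiagonal hp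
        have h1' : (p.1:ℝ) ≠ 0 := by exact_mod_cast h1
        have h2' : (p.2:ℝ) ≠ 0 := by exact_mod_cast h2
        have hm' : (m:ℝ) = (p.1:ℝ) * (p.2:ℝ) := by exact_mod_cast hpm.symm
        rw [hm']
        field_simp
    _ = ∑ m ∈ Finset.Icc 1 N, (m:ℝ)⁻¹ * (if m = 1 then 1 else 0) := by
        exact Finset.sum_congr rfl fun m _ => by rw [musum m]
    _ = ∑ m ∈ Finset.Icc 1 N, (if m = 1 then (m:ℝ)⁻¹ else 0) := by
        refine Finset.sum_congr rfl fun m _ => ?_; split <;> simp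
    _ = 1 := by rw [Finset.sum_ite_eq' (Finset.Icc 1 N) 1 (fun m => (m:ℝ)⁻¹)]; simp [hN]

lemma Hcast (m : ℕ) : ((harmonic m : ℚ) : ℝ) = ∑ k ∈ Finset.Icc 1 m, (k:ℝ)⁻¹ := by
  rw [harmonic_eq_sum_Icc]
  push_cast
  rfl

lemma harm_lb (m : ℕ) (hm : 1 ≤ m) :
    Real.log m + Real.eulerMascheroniConstant < ∑ k ∈ Finset.Icc 1 m, (k:ℝ)⁻¹ := by
  have h := Real.eulerMascheroniConstant_lt_eulerMascheroniSeq' m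
  rw [Real.eulerMascheroniSeq'] at h
  simp only [Nat.one_le_iff_ne_zero.mp hm, if_false] at h
  rw [← Hcast]
  linarith

lemma harm_ub (m : ℕ) :
    (∑ k ∈ Finset.Icc 1 m, (k:ℝ)⁻¹) < Real.log (m+1) + Real.eulerMascheroniConstant := by
  have h := Real.eulerMascheroniSeq_lt_eulerMascheroniConstant m
  rw [Real.eulerMascheroniSeq] at h
  rw [← Hcast]
  linarith

lemma part1 (x : ℝ) (hx : 1 ≤ x) :
    |∑ n ∈ Finset.Icc 1 ⌊x⌋₊,
      ((ArithmeticFunction.moebius n : ℝ) / n) * Real.log (x / n)| ≤ 4 := by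
  set N := ⌊x⌋₊ with hNdef
  have hx0 : (0:ℝ) < x := by linarith
  have hN : 1 ≤ N := Nat.le_floor (by exact_mod_cast hx)
  have hNx : (N:ℝ) ≤ x := Nat.floor_le hx0.le
  have hxN : x < N + 1 := Nat.lt_floor_add_one x
  set γ := Real.eulerMascheroniConstant with hγ
  have hγ0 : 0 < γ := lt_trans (by norm_num) Real.one_half_lt_eulerMascheroniConstant
  have hγ1 : γ ≤ 1 := le_of_lt (lt_trans Real.eulerMascheroniConstant_lt_two_thirds (by norm_num))
  set M := ∑ n ∈ Finset.Icc 1 N, ((ArithmeticFunction.moebius n : ℤ) : ℝ) / n with hM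
  set e : ℕ → ℝ := fun n =>
    Real.log (x/n) + γ - ∑ k ∈ Finset.Icc 1 (N/n), (k:ℝ)⁻¹ with he
  have hsplit : ∑ n ∈ Finset.Icc 1 N,
      ((ArithmeticFunction.moebius n : ℝ) / n) * Real.log (x / n)
      = 1 - γ * M + ∑ n ∈ Finset.Icc 1 N,
          ((ArithmeticFunction.moebius n : ℝ) / n) * e n := by
    rw [← key1 N hN, hM, Finset.mul_sum, ← Finset.sum_sub_distrib, ← Finset.sum_add_distrib]
    refine Finset.sum_congr rfl fun n hn => ?_
    rw [he]
    push_cast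
    ring
  have hterm : ∀ n ∈ Finset.Icc 1 N,
      |((ArithmeticFunction.moebius n : ℝ) / n) * e n| ≤ 2 / x := by
    intro n hn
    obtain ⟨hn1, hnN⟩ := Finset.mem_Icc.mp hn
    have hn0 : (0:ℝ) < n := by exact_mod_cast hn1
    set m := N / n with hm
    have hm1 : 1 ≤ m := (Nat.one_le_div_iff (by omega)).mpr hnN
    have hm0 : (0:ℝ) < m := by exact_mod_cast hm1
    have hmf : m = ⌊x / n⌋₊ := by rw [hm, hNdef, Nat.floor_div_natCast]
    have hmle : (m:ℝ) ≤ x / n := by rw [hmf]; exact Nat.floor_le (by positivity)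
    have hmlt : x / n < m + 1 := by rw [hmf]; exact Nat.lt_floor_add_one _
    have hxn0 : 0 < x / n := by positivity
    have hlog1 : Real.log m ≤ Real.log (x/n) := Real.log_le_log hm0 hmle
    have hlog2 : Real.log (x/n) ≤ Real.log (m+1) :=
      Real.log_le_log hxn0 hmlt.le
    have hH1 := harm_lb m hm1
    have hH2 := harm_ub m
    have habse : |e n| ≤ Real.log (m+1) - Real.log m := by
      rw [abs_le]
      constructor
      · rw [he]; simp only; rw [hm] at hH2 ⊢; linarith
      · rw [he]; simp only; rw [hm] at hH1 ⊢; linarith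
    have hloggap : Real.log (m+1) - Real.log m ≤ 1 / m := by
      rw [← Real.log_div (by positivity) (by positivity)]
      have := Real.log_le_sub_one_of_pos (x := ((m:ℝ)+1)/m) (by positivity)
      have heq : ((m:ℝ)+1)/m - 1 = 1/m := by field_simp; ring
      linarith [this, heq ▸ this]
    have hfrac : (1:ℝ) / m ≤ 2 * n / x := by
      rw [div_le_div_iff₀ hm0 hx0]
      have h1 : x < ((m:ℝ) + 1) * n := by
        rw [div_lt_iff₀ hn0] at hmlt; linarith
      have hm1' : (1:ℝ) ≤ m := by exact_mod_cast hm1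
      nlinarith [mul_le_mul_of_nonneg_right (show (m:ℝ)+1 ≤ 2*m by linarith) hn0.le]
    have hmu : |((ArithmeticFunction.moebius n : ℝ))| ≤ 1 := by
      have := ArithmeticFunction.abs_moebius_le_one (n := n)
      exact_mod_cast (by exact_mod_cast this :
        |((ArithmeticFunction.moebius n : ℤ) : ℝ)| ≤ ((1:ℤ):ℝ))
    have h2 : |e n| ≤ 2 * n / x := by
      calc |e n| ≤ Real.log (m+1) - Real.log m := habse
        _ ≤ 1 / m := hloggap
        _ ≤ 2 * n / x := hfrac
    calc |((ArithmeticFunction.moebius n : ℝ) / n) * e n|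
        = |(ArithmeticFunction.moebius n : ℝ)| / n * |e n| := by
          rw [abs_mul, abs_div, abs_of_nonneg hn0.le]
      _ ≤ 1 / n * (2 * n / x) := by
          have h3 : |(ArithmeticFunction.moebius n : ℝ)| / n ≤ 1 / n := by gcongr
          exact mul_le_mul h3 h2 (abs_nonneg _) (by positivity)
      _ = 2 / x := by field_simp
  have hE : |∑ n ∈ Finset.Icc 1 N,
      ((ArithmeticFunction.moebius n : ℝ) / n) * e n| ≤ 2 := by
    calc |∑ n ∈ Finset.Icc 1 N, ((ArithmeticFunction.moebius n : ℝ) / n) * e n|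
        ≤ ∑ n ∈ Finset.Icc 1 N, |((ArithmeticFunction.moebius n : ℝ) / n) * e n| :=
          Finset.abs_sum_le_sum_abs _ _
      _ ≤ ∑ _n ∈ Finset.Icc 1 N, 2 / x := Finset.sum_le_sum hterm
      _ = (N:ℝ) * (2 / x) := by rw [Finset.sum_const, Nat.card_Icc]; simp [nsmul_eq_mul]
      _ ≤ x * (2 / x) := by gcongr
      _ = 2 := by field_simp
  have hMb : |M| ≤ 1 := Mbound N hN
  rw [hsplit]
  have hgm : |γ * M| ≤ 1 := by
    rw [abs_mul, abs_of_nonneg hγ0.le]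
    calc γ * |M| ≤ 1 * 1 := mul_le_mul hγ1 hMb (abs_nonneg _) zero_le_one
      _ = 1 := by ring
  have hA : |1 - γ * M| ≤ 2 := by
    obtain ⟨hl, hr⟩ := abs_le.mp hgm
    rw [abs_le]; constructor <;> linarith
  calc |1 - γ * M + ∑ n ∈ Finset.Icc 1 N, ((ArithmeticFunction.moebius n : ℝ) / n) * e n|
      ≤ |1 - γ * M| + |∑ n ∈ Finset.Icc 1 N, ((ArithmeticFunction.moebius n : ℝ) / n) * e n| :=
        abs_add_le _ _
    _ ≤ 2 + 2 := add_le_add hA hE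
    _ = 4 := by ring

noncomputable def ff : ℝ → ℝ := fun t =>
  (∑ i ∈ Finset.Icc 1 ⌊t⌋₊, (ArithmeticFunction.moebius i : ℝ) / i) / t

lemma Tshift (N : ℕ) (hN : 1 ≤ N) (x : ℝ) (hx : 0 < x) :
    ∑ n ∈ Finset.Icc 1 N, (ArithmeticFunction.moebius n : ℝ)/n * Real.log (x/n)
      = ∑ n ∈ Finset.Icc 1 N, (ArithmeticFunction.moebius n : ℝ)/n * Real.log ((N:ℝ)/n)
        + (∑ n ∈ Finset.Icc 1 N, (ArithmeticFunction.moebius n : ℝ)/n)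
          * Real.log (x / N) := by
  rw [Finset.sum_mul, ← Finset.sum_add_distrib]
  refine Finset.sum_congr rfl fun n hn => ?_
  have hn1 : 1 ≤ n := (Finset.mem_Icc.mp hn).1
  have hn0 : (n:ℝ) ≠ 0 := by positivity
  have hN0 : (N:ℝ) ≠ 0 := by positivity
  have h1 : Real.log (x/n) = Real.log ((N:ℝ)/n) + Real.log (x/(N:ℝ)) := by
    rw [Real.log_div hx.ne' hn0, Real.log_div hN0 hn0, Real.log_div hx.ne' hN0]
    ring
  rw [h1]; ring

lemma floor_eq_on (N : ℕ) (hN : 1 ≤ N) (t : ℝ) (h1 : (N:ℝ) ≤ t) (h2 : t < N + 1) :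
    ⌊t⌋₊ = N := by
  have hN0 : (0:ℝ) < N := by exact_mod_cast hN
  rw [Nat.floor_eq_iff (by linarith)]
  exact ⟨h1, h2⟩

lemma QN : ∀ N : ℕ, 1 ≤ N → IntervalIntegrable ff volume 1 N ∧
    ∫ t in (1:ℝ)..N, ff t
      = ∑ n ∈ Finset.Icc 1 N, (ArithmeticFunction.moebius n : ℝ)/n * Real.log ((N:ℝ)/n) := by
  refine Nat.le_induction ?_ ?_
  · constructor
    · norm_num
    · norm_num
  · rintro N hN ⟨ih_int, ih_val⟩
    set c := ∑ i ∈ Finset.Icc 1 N, (ArithmeticFunction.moebius i : ℝ) / i with hc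
    have hN0 : (0:ℝ) < N := by exact_mod_cast hN
    have hg : IntervalIntegrable (fun t => c / t) volume N (N+1) := by
      apply ContinuousOn.intervalIntegrable
      apply ContinuousOn.div continuousOn_const continuousOn_id
      intro t ht
      rw [Set.uIcc_of_le (by linarith)] at ht
      have h1 : (0:ℝ) < t := lt_of_lt_of_le hN0 ht.1
      simpa using h1.ne'
    have hae : ∀ᵐ t ∂(volume.restrict (Set.uIoc (N:ℝ) (N+1))), (fun t => c/t) t = ff t := by
      rw [ae_restrict_iff' measurableSet_uIoc]
      filter_upwards [MeasureTheory.compl_mem_ae_iff.mpr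
        (MeasureTheory.measure_singleton ((N:ℝ)+1))] with t ht hts
      have htne : t ≠ (N:ℝ) + 1 := ht
      rw [Set.uIoc_of_le (by linarith)] at hts
      have hfl : ⌊t⌋₊ = N := floor_eq_on N hN t hts.1.le (lt_of_le_of_ne hts.2 htne)
      simp only [ff, hfl, hc]
    have hint2 : IntervalIntegrable ff volume N (N+1) := hg.congr_ae hae
    have hval2 : ∫ t in (N:ℝ)..(N+1), ff t = c * (Real.log ((N:ℝ)+1) - Real.log N) := by
      rw [← intervalIntegral.integral_congr_ae
        ((ae_restrict_iff' measurableSet_uIoc).mp hae)]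
      have : ∫ t in (N:ℝ)..(N+1), c / t = c * ∫ t in (N:ℝ)..(N+1), 1 / t := by
        rw [← intervalIntegral.integral_const_mul]
        congr 1; ext t; ring
      rw [this, integral_one_div (by
        rw [Set.uIcc_of_le (by linarith)]
        rintro ⟨h1, h2⟩
        linarith), Real.log_div (by linarith) hN0.ne']
    have hRHS : ∑ n ∈ Finset.Icc 1 (N+1),
        (ArithmeticFunction.moebius n : ℝ)/n * Real.log ((↑(N+1):ℝ)/n)
        = ∑ n ∈ Finset.Icc 1 N, (ArithmeticFunction.moebius n : ℝ)/n * Real.log ((N:ℝ)/n)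
          + c * (Real.log ((N:ℝ)+1) - Real.log N) := by
      rw [Finset.sum_Icc_succ_top (by omega : 1 ≤ N + 1)]
      have h2 : ∀ n : ℕ, ((↑(N+1):ℝ)/n) = ((N:ℝ)+1)/n := by intro n; push_cast; ring_nf
      have hlast : (ArithmeticFunction.moebius (N+1) : ℝ)/(↑(N+1):ℝ)
          * Real.log ((↑(N+1):ℝ)/(↑(N+1):ℝ)) = 0 := by
        rw [div_self (by positivity), Real.log_one, mul_zero]
      rw [hlast, add_zero]
      simp_rw [h2]
      rw [Tshift N hN ((N:ℝ)+1) (by linarith)]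
      rw [Real.log_div (by linarith) hN0.ne']
    constructor
    · have : ((N:ℝ)+1) = ((N+1 : ℕ) : ℝ) := by push_cast; ring
      exact ih_int.trans (this ▸ hint2)
    · have hcast : ((N+1 : ℕ) : ℝ) = (N:ℝ)+1 := by push_cast; ring
      rw [hRHS, hcast, ← intervalIntegral.integral_add_adjacent_intervals ih_int hint2,
        ih_val, hval2]

lemma part2 (x : ℝ) (hx : 1 ≤ x) :
    |∫ t in (1:ℝ)..x, (∑ i ∈ Finset.Icc 1 ⌊t⌋₊,
      (ArithmeticFunction.moebius i : ℝ) / i) / t|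
      ≤ |∑ n ∈ Finset.Icc 1 ⌊x⌋₊,
          ((ArithmeticFunction.moebius n : ℝ) / n) * Real.log (x / n)| := by
  set N := ⌊x⌋₊ with hNdef
  have hx0 : (0:ℝ) < x := by linarith
  have hN : 1 ≤ N := Nat.le_floor (by exact_mod_cast hx)
  have hN0 : (0:ℝ) < N := by exact_mod_cast hN
  have hNx : (N:ℝ) ≤ x := Nat.floor_le hx0.le
  have hxN : x < N + 1 := Nat.lt_floor_add_one x
  obtain ⟨hint, hval⟩ := QN N hN
  set c := ∑ i ∈ Finset.Icc 1 N, (ArithmeticFunction.moebius i : ℝ) / i with hc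
  have hEqOn : Set.EqOn ff (fun t => c / t) (Set.uIcc (N:ℝ) x) := by
    intro t ht
    rw [Set.uIcc_of_le hNx] at ht
    have hfl : ⌊t⌋₊ = N := floor_eq_on N hN t ht.1 (lt_of_le_of_lt ht.2 hxN)
    simp only [ff, hfl, hc]
  have hg : IntervalIntegrable (fun t => c / t) volume N x := by
    apply ContinuousOn.intervalIntegrable
    apply ContinuousOn.div continuousOn_const continuousOn_id
    intro t ht
    rw [Set.uIcc_of_le hNx] at ht
    have h1 : (0:ℝ) < t := lt_of_lt_of_le hN0 ht.1
    simpa using h1.ne'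
  have hint2 : IntervalIntegrable ff volume N x := by
    refine hg.congr_ae ?_
    exact (MeasureTheory.ae_restrict_mem measurableSet_uIoc).mono fun t ht =>
      (hEqOn (Set.uIoc_subset_uIcc ht)).symm
  have hval2 : ∫ t in (N:ℝ)..x, ff t = c * (Real.log x - Real.log N) := by
    rw [intervalIntegral.integral_congr hEqOn]
    have h2 : ∫ t in (N:ℝ)..x, c / t = c * ∫ t in (N:ℝ)..x, 1 / t := by
      rw [← intervalIntegral.integral_const_mul]
      congr 1; ext t; ring
    rw [h2, integral_one_div (by
      rw [Set.uIcc_of_le hNx]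
      rintro ⟨h1, h2⟩
      linarith), Real.log_div hx0.ne' hN0.ne']
  have hfinal : (∫ t in (1:ℝ)..x, ff t)
      = ∑ n ∈ Finset.Icc 1 N, ((ArithmeticFunction.moebius n : ℝ) / n) * Real.log (x / n) := by
    rw [← intervalIntegral.integral_add_adjacent_intervals hint hint2, hval, hval2,
      Tshift N hN x hx0, Real.log_div hx0.ne' hN0.ne']
  have hff : (∫ t in (1:ℝ)..x, (∑ i ∈ Finset.Icc 1 ⌊t⌋₊,
      (ArithmeticFunction.moebius i : ℝ) / i) / t) = ∫ t in (1:ℝ)..x, ff t := rfl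
  rw [hff, hfinal]

theorem stmt_16 :
    (∃ C : ℝ, ∀ x : ℝ, 1 ≤ x →
      |∑ n ∈ Finset.Icc 1 ⌊x⌋₊,
        ((ArithmeticFunction.moebius n : ℝ) / n) * Real.log (x / n)| ≤ C) ∧
    (∃ C : ℝ, ∀ x : ℝ, 1 ≤ x →
      |∫ t in (1:ℝ)..x, (∑ i ∈ Finset.Icc 1 ⌊t⌋₊,
        (ArithmeticFunction.moebius i : ℝ) / i) / t| ≤ C) := by
  constructor
  · exact ⟨4, part1⟩
  · exact ⟨4, fun x hx => le_trans (part2 x hx) (part1 x hx)⟩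
end

section
/- Fix an integer T ≥ 2 and define μ_T(n) = μ(n) for 1 ≤ n < T, μ_T(T) = −T · Σ_{j < T} μ(j)/j, and μ_T(n) = 0 for n > T. Let m_T = 1 ∗ μ_T (Dirichlet convolution with the constant function 1) and M_T(x) = Σ_{n ≤ x} m_T(n). Then for every real x ≥ T², Σ_{n ≤ x} (Λ ∗ m_T)(n) = Σ_{j ≤ T−1} ψ(x/j) · m_T(j) + Σ_{i ≤ x/(T−1)} M_T(x/i) · Λ(i) − M_T(T−1) · ψ(x/(T−1)). -/
/-- Diamond–Erdős truncated Möbius function `μ_T`. -/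
noncomputable def muT (T : ℕ) (n : ℕ) : ℝ :=
  if n < T then (ArithmeticFunction.moebius n : ℝ)
  else if n = T then -(T : ℝ) * ∑ j ∈ Finset.Ico 1 T, (ArithmeticFunction.moebius j : ℝ) / j
  else 0

/-- `m_T = 1 ∗ μ_T`, the Dirichlet convolution of the constant function `1` with `μ_T`. -/
noncomputable def mT (T : ℕ) (n : ℕ) : ℝ := ∑ d ∈ n.divisors, muT T d

/-- `M_T x = ∑_{n ≤ x} m_T(n)`. -/
noncomputable def MT (T : ℕ) (x : ℝ) : ℝ := ∑ n ∈ Finset.Icc 1 ⌊x⌋₊, mT T n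

lemma key_swap (N : ℕ) (F : ℕ → ℕ → ℝ) :
    ∑ n ∈ Finset.Icc 1 N, ∑ p ∈ n.divisorsAntidiagonal, F p.1 p.2
      = ∑ b ∈ Finset.Icc 1 N, ∑ a ∈ Finset.Icc 1 (N / b), F a b := by
  have h1 : ∀ n ∈ Finset.Icc 1 N, ∑ p ∈ n.divisorsAntidiagonal, F p.1 p.2
      = ∑ b ∈ n.divisors, F (n / b) b := fun n _ => Nat.sum_divisorsAntidiagonal' F
  rw [Finset.sum_congr rfl h1]
  have h2 : ∑ n ∈ Finset.Icc 1 N, ∑ b ∈ n.divisors, F (n / b) b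
      = ∑ b ∈ Finset.Icc 1 N, ∑ n ∈ (Finset.Icc 1 N).filter (b ∣ ·), F (n / b) b := by
    apply Finset.sum_comm'
    intro n b
    simp only [Finset.mem_Icc, Nat.mem_divisors, Finset.mem_filter]
    constructor
    · rintro ⟨⟨h1n, hnN⟩, hdvd, -⟩
      have hb1 : 1 ≤ b := Nat.pos_of_dvd_of_pos hdvd (by omega)
      have hbn : b ≤ n := Nat.le_of_dvd (by omega) hdvd
      exact ⟨⟨⟨h1n, hnN⟩, hdvd⟩, hb1, by omega⟩
    · rintro ⟨⟨⟨h1n, hnN⟩, hdvd⟩, -, -⟩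
      exact ⟨⟨h1n, hnN⟩, hdvd, by omega⟩
  rw [h2]
  refine Finset.sum_congr rfl fun b hb => ?_
  simp only [Finset.mem_Icc] at hb
  refine Finset.sum_nbij' (fun n => n / b) (fun a => a * b) ?_ ?_ ?_ ?_ ?_
  · intro n hn
    simp only [Finset.mem_filter, Finset.mem_Icc] at hn ⊢
    obtain ⟨⟨h1n, hnN⟩, hd⟩ := hn
    constructor
    · exact Nat.one_le_div_iff (by omega) |>.2 (Nat.le_of_dvd (by omega) hd)
    · exact Nat.div_le_div_right hnN
  · intro a ha
    simp only [Finset.mem_Icc] at ha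
    simp only [Finset.mem_filter, Finset.mem_Icc]
    refine ⟨⟨by nlinarith [ha.1, hb.1], ?_⟩, dvd_mul_left b a⟩
    exact (Nat.le_div_iff_mul_le (by omega)).1 ha.2
  · intro n hn
    simp only [Finset.mem_filter] at hn
    exact Nat.div_mul_cancel hn.2
  · intro a _
    exact Nat.mul_div_cancel a (by omega)
  · intro n _
    rfl

theorem stmt_17 (T : ℕ) (hT : 2 ≤ T) (x : ℝ) (hx : (T : ℝ) ^ 2 ≤ x) :
    (∑ n ∈ Finset.Icc 1 ⌊x⌋₊, ∑ p ∈ n.divisorsAntidiagonal,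
        ArithmeticFunction.vonMangoldt p.1 * mT T p.2) =
      (∑ j ∈ Finset.Icc 1 (T - 1), psi (x / j) * mT T j) +
        (∑ i ∈ Finset.Icc 1 ⌊x / ((T : ℝ) - 1)⌋₊, MT T (x / i) * ArithmeticFunction.vonMangoldt i) -
        MT T ((T : ℝ) - 1) * psi (x / ((T : ℝ) - 1)) := by
  set N := ⌊x⌋₊ with hN
  set K := T - 1 with hKdef
  have hK1 : 1 ≤ K := by omega
  have hNT : T ^ 2 ≤ N := Nat.le_floor (by exact_mod_cast hx)
  have hKN : K ≤ N := by have h := Nat.le_self_pow (by norm_num : 2 ≠ 0) T; omega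
  have hKcast : ((T:ℝ) - 1) = (K : ℝ) := by
    rw [hKdef]; push_cast [Nat.cast_sub (by omega : 1 ≤ T)]; ring
  set M := ⌊x / ((T:ℝ) - 1)⌋₊ with hM
  have hMval : M = N / K := by
    rw [hM, hKcast, hN, Nat.floor_div_natCast]
  rw [key_swap N (fun a b => ArithmeticFunction.vonMangoldt a * mT T b)]
  have hsplit : Finset.Icc 1 N = Finset.Icc 1 K ∪ Finset.Icc (K+1) N := by
    ext m; simp only [Finset.mem_Icc, Finset.mem_union]; omega
  have hdisj : Disjoint (Finset.Icc 1 K) (Finset.Icc (K+1) N) := by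
    rw [Finset.disjoint_left]; intro a ha hb
    simp only [Finset.mem_Icc] at ha hb; omega
  rw [hsplit, Finset.sum_union hdisj]
  -- Part 1
  have hpart1 : ∑ b ∈ Finset.Icc 1 K, ∑ a ∈ Finset.Icc 1 (N / b),
      ArithmeticFunction.vonMangoldt a * mT T b
      = ∑ j ∈ Finset.Icc 1 (T-1), psi (x / j) * mT T j := by
    refine Finset.sum_congr rfl fun b hb => ?_
    rw [← Finset.sum_mul]
    congr 1
    rw [psi, Nat.floor_div_natCast]
  -- Part 2 : swap the order of summation
  have hswap2 : ∑ b ∈ Finset.Icc (K+1) N, ∑ a ∈ Finset.Icc 1 (N / b),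
      ArithmeticFunction.vonMangoldt a * mT T b
      = ∑ a ∈ Finset.Icc 1 M, ∑ b ∈ Finset.Icc (K+1) (N / a),
        ArithmeticFunction.vonMangoldt a * mT T b := by
    apply Finset.sum_comm'
    intro b a
    simp only [Finset.mem_Icc]
    rw [hMval]
    constructor
    · rintro ⟨⟨hKb, hbN⟩, h1a, haNb⟩
      have hab : a * b ≤ N := (Nat.le_div_iff_mul_le (by omega)).1 haNb
      refine ⟨⟨hKb, ?_⟩, h1a, ?_⟩
      · exact (Nat.le_div_iff_mul_le (by omega)).2 (by rwa [mul_comm] at hab)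
      · exact (Nat.le_div_iff_mul_le (by omega)).2
          (le_trans (Nat.mul_le_mul_left a (by omega)) hab)
    · rintro ⟨⟨hKb, hbNa⟩, h1a, haM⟩
      have hab : b * a ≤ N := (Nat.le_div_iff_mul_le (by omega)).1 hbNa
      refine ⟨⟨hKb, le_trans hbNa (Nat.div_le_self _ _)⟩, h1a, ?_⟩
      exact (Nat.le_div_iff_mul_le (by omega)).2 (by rwa [mul_comm] at hab)
  rw [hpart1, hswap2]
  have hpsiK : psi (x / ((T:ℝ) - 1)) = ∑ a ∈ Finset.Icc 1 M, ArithmeticFunction.vonMangoldt a := by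
    rw [psi, ← hM]
  have hMTK : MT T ((T:ℝ) - 1) = ∑ b ∈ Finset.Icc 1 K, mT T b := by
    rw [MT, hKcast, Nat.floor_natCast]
  have hinner : ∀ a ∈ Finset.Icc 1 M, ∑ b ∈ Finset.Icc (K+1) (N / a),
      ArithmeticFunction.vonMangoldt a * mT T b
      = MT T (x / a) * ArithmeticFunction.vonMangoldt a
        - (∑ b ∈ Finset.Icc 1 K, mT T b) * ArithmeticFunction.vonMangoldt a := by
    intro a ha
    simp only [Finset.mem_Icc] at ha
    have hKNa : K ≤ N / a := by
      rw [hMval] at ha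
      exact (Nat.le_div_iff_mul_le (by omega)).2
        (le_trans (by nlinarith [ha.1]) ((Nat.le_div_iff_mul_le (by omega)).1 ha.2))
    have hsplit2 : Finset.Icc 1 (N / a) = Finset.Icc 1 K ∪ Finset.Icc (K+1) (N / a) := by
      ext m; simp only [Finset.mem_Icc, Finset.mem_union]; omega
    have hdisj2 : Disjoint (Finset.Icc 1 K) (Finset.Icc (K+1) (N / a)) := by
      rw [Finset.disjoint_left]; intro c hc hc'
      simp only [Finset.mem_Icc] at hc hc'; omega
    have hMTa : MT T (x / a) = ∑ b ∈ Finset.Icc 1 (N / a), mT T b := by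
      rw [MT, hN, Nat.floor_div_natCast]
    rw [hMTa, hsplit2, Finset.sum_union hdisj2, ← Finset.mul_sum]
    ring
  rw [Finset.sum_congr rfl hinner, Finset.sum_sub_distrib, hMTK, hpsiK, Finset.mul_sum]
  ring
end
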